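/- arXiv:1812.05821 — 11 statements merged into one kernel-verified Lean document; each statement's English description precedes it below -/
import Mathlib

section
/- A partial function H = {(T_1,f_1),...,(T_n,f_n)} with T_i ⊆ [m] and f_i ≥ 0 is extendible to a monotone subadditive function f: 2^[m] → ℝ≥0 if and only if for all indices i_1,...,i_r, i_{r+1} ∈ [n] with T_{i_{r+1}} ⊆ T_{i_1} ∪ ... ∪ T_{i_r}, we have f_{i_1} + ... + f_{i_r} ≥ f_{i_{r+1}}. -/
open Finset

section Aux

variable {m n : ℕ} (T : Fin n → Finset (Fin m)) (f : Fin n → ℝ)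

/-- The set of nonempty index sets whose union covers `S`. -/
noncomputable def extCovers (S : Finset (Fin m)) : Finset (Finset (Fin n)) :=
  Finset.univ.powerset.filter (fun I : Finset (Fin n) => I.Nonempty ∧ S ⊆ I.biUnion T)

lemma mem_extCovers {S : Finset (Fin m)} {I : Finset (Fin n)} :
    I ∈ extCovers T S ↔ I.Nonempty ∧ S ⊆ I.biUnion T := by
  simp [extCovers]

/-- The extension. -/
noncomputable def extg (S : Finset (Fin m)) : ℝ :=
  if h : (extCovers T S).Nonempty then
    (extCovers T S).inf' h (fun I => ∑ i ∈ I, f i)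
  else ∑ i, f i

lemma extg_eq_inf' {S : Finset (Fin m)} (h : (extCovers T S).Nonempty) :
    extg T f S = (extCovers T S).inf' h (fun I => ∑ i ∈ I, f i) := dif_pos h

lemma extg_eq_total {S : Finset (Fin m)} (h : ¬ (extCovers T S).Nonempty) :
    extg T f S = ∑ i, f i := dif_neg h

lemma extg_le_sum {S : Finset (Fin m)} {I : Finset (Fin n)}
    (hI : I ∈ extCovers T S) : extg T f S ≤ ∑ i ∈ I, f i := by
  rw [extg_eq_inf' T f ⟨I, hI⟩]
  exact Finset.inf'_le _ hI

lemma extg_nonneg (hf : ∀ i, 0 ≤ f i) (S : Finset (Fin m)) : 0 ≤ extg T f S := by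
  by_cases h : (extCovers T S).Nonempty
  · rw [extg_eq_inf' T f h]
    exact Finset.le_inf' _ _ (fun I _ => Finset.sum_nonneg fun i _ => hf i)
  · rw [extg_eq_total T f h]
    exact Finset.sum_nonneg fun i _ => hf i

lemma extg_le_total' (hf : ∀ i, 0 ≤ f i) (S : Finset (Fin m)) :
    extg T f S ≤ ∑ i, f i := by
  by_cases h : (extCovers T S).Nonempty
  · obtain ⟨I, hI⟩ := h
    exact le_trans (extg_le_sum T f hI)
      (Finset.sum_le_sum_of_subset_of_nonneg (Finset.subset_univ I)
        (fun i _ _ => hf i))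
  · exact le_of_eq (extg_eq_total T f h)

lemma extg_mono (hf : ∀ i, 0 ≤ f i) {A B : Finset (Fin m)} (hBA : B ⊆ A) :
    extg T f B ≤ extg T f A := by
  by_cases hA : (extCovers T A).Nonempty
  · rw [extg_eq_inf' T f hA]
    refine Finset.le_inf' _ _ (fun I hI => ?_)
    rw [mem_extCovers] at hI
    exact extg_le_sum T f (S := B) ((mem_extCovers T).2 ⟨hI.1, hBA.trans hI.2⟩)
  · rw [extg_eq_total T f hA]
    exact extg_le_total' T f hf B

lemma extg_subadd (hf : ∀ i, 0 ≤ f i) (A B : Finset (Fin m)) :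
    extg T f (A ∪ B) ≤ extg T f A + extg T f B := by
  by_cases hA : (extCovers T A).Nonempty
  · by_cases hB : (extCovers T B).Nonempty
    · obtain ⟨I, hI, hIeq⟩ := Finset.exists_mem_eq_inf' hA (fun I => ∑ i ∈ I, f i)
      obtain ⟨J, hJ, hJeq⟩ := Finset.exists_mem_eq_inf' hB (fun J => ∑ i ∈ J, f i)
      rw [mem_extCovers] at hI hJ
      have hcov : I ∪ J ∈ extCovers T (A ∪ B) := by
        rw [mem_extCovers]
        refine ⟨hI.1.mono Finset.subset_union_left, Finset.union_subset ?_ ?_⟩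
        · exact hI.2.trans (Finset.biUnion_subset_biUnion_of_subset_left _
            Finset.subset_union_left)
        · exact hJ.2.trans (Finset.biUnion_subset_biUnion_of_subset_left _
            Finset.subset_union_right)
      have h1 : extg T f (A ∪ B) ≤ ∑ i ∈ I ∪ J, f i := extg_le_sum T f hcov
      have h2 : ∑ i ∈ I ∪ J, f i ≤ ∑ i ∈ I, f i + ∑ i ∈ J, f i := by
        have := Finset.sum_union_inter (s₁ := I) (s₂ := J) (f := f)
        have hpos : 0 ≤ ∑ i ∈ I ∩ J, f i := Finset.sum_nonneg fun i _ => hf i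
        linarith
      rw [extg_eq_inf' T f hA, extg_eq_inf' T f hB]
      linarith
    · have hAB : ¬ (extCovers T (A ∪ B)).Nonempty := by
        rintro ⟨I, hI⟩
        rw [mem_extCovers] at hI
        exact hB ⟨I, (mem_extCovers T).2 ⟨hI.1, Finset.subset_union_right.trans hI.2⟩⟩
      rw [extg_eq_total T f hAB, extg_eq_total T f hB]
      linarith [extg_nonneg T f hf A]
  · have hAB : ¬ (extCovers T (A ∪ B)).Nonempty := by
      rintro ⟨I, hI⟩
      rw [mem_extCovers] at hI
      exact hA ⟨I, (mem_extCovers T).2 ⟨hI.1, Finset.subset_union_left.trans hI.2⟩⟩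
    rw [extg_eq_total T f hAB, extg_eq_total T f hA]
    linarith [extg_nonneg T f hf B]

end Aux

/-- A partial function is extendible to a monotone subadditive
nonnegative function on `2^[m]` iff the covering condition holds. -/
theorem subadditive_extension_iff (m n : ℕ) (T : Fin n → Finset (Fin m))
    (f : Fin n → ℝ) (hf : ∀ i, 0 ≤ f i) :
    (∃ g : Finset (Fin m) → ℝ,
        (∀ S, 0 ≤ g S) ∧
        (∀ A B : Finset (Fin m), B ⊆ A → g B ≤ g A) ∧
        (∀ A B : Finset (Fin m), g (A ∪ B) ≤ g A + g B) ∧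
        (∀ i, g (T i) = f i)) ↔
      (∀ (r : ℕ), 0 < r → ∀ (idx : Fin r → Fin n) (i' : Fin n),
        T i' ⊆ Finset.univ.biUnion (fun j => T (idx j)) →
        f i' ≤ ∑ j, f (idx j)) := by
  constructor
  · rintro ⟨g, hg0, hmono, hsub, hext⟩ r hr idx i' hcov
    have key : ∀ (s : Finset (Fin r)), s.Nonempty →
        g (s.biUnion (fun j => T (idx j))) ≤ ∑ j ∈ s, g (T (idx j)) := by
      intro s hs
      induction hs using Finset.Nonempty.cons_induction with
      | singleton j => simp
      | cons j s hj hs ih =>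
        rw [Finset.cons_eq_insert, Finset.biUnion_insert, Finset.sum_insert hj]
        exact le_trans (hsub _ _) (by linarith)
    have huniv : (Finset.univ : Finset (Fin r)).Nonempty :=
      ⟨⟨0, hr⟩, Finset.mem_univ _⟩
    calc f i' = g (T i') := (hext i').symm
      _ ≤ g (Finset.univ.biUnion (fun j => T (idx j))) := hmono _ _ hcov
      _ ≤ ∑ j, g (T (idx j)) := key _ huniv
      _ = ∑ j, f (idx j) := by simp [hext]
  · intro h
    refine ⟨extg T f, extg_nonneg T f hf, fun A B => extg_mono T f hf,
      extg_subadd T f hf, fun i' => ?_⟩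
    have hself : ({i'} : Finset (Fin n)) ∈ extCovers T (T i') :=
      (mem_extCovers T).2 ⟨Finset.singleton_nonempty _, by simp⟩
    have hub : extg T f (T i') ≤ f i' := by
      simpa using extg_le_sum T f hself
    have hlb : f i' ≤ extg T f (T i') := by
      rw [extg_eq_inf' T f ⟨_, hself⟩]
      refine Finset.le_inf' _ _ (fun I hI => ?_)
      rw [mem_extCovers] at hI
      obtain ⟨hIne, hIcov⟩ := hI
      have hr : 0 < I.card := Finset.card_pos.2 hIne
      set idx : Fin I.card → Fin n := fun j => (I.equivFin.symm j : Fin n) with hidx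
      have hcov : T i' ⊆ Finset.univ.biUnion (fun j => T (idx j)) := by
        intro x hx
        have hx' := hIcov hx
        rw [Finset.mem_biUnion] at hx' ⊢
        obtain ⟨i, hi, hxi⟩ := hx'
        refine ⟨I.equivFin ⟨i, hi⟩, Finset.mem_univ _, ?_⟩
        simpa [hidx] using hxi
      have hsum : ∑ j, f (idx j) = ∑ i ∈ I, f i := by
        rw [← Finset.sum_coe_sort I f]
        exact (Fintype.sum_equiv I.equivFin _ _ (fun x => by simp [hidx])).symm
      rw [← hsum]
      exact h I.card hr idx i' hcov
    linarith
end

section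
/- Suppose the partial function H on points T_1,...,T_n ⊆ [m] with nonnegative values f_i satisfies: for all i_1,...,i_r, i_{r+1} with T_{i_{r+1}} ⊆ ∪_{j≤r} T_{i_j}, one has Σ_j f_{i_j} ≥ f_{i_{r+1}}. Then the function f̂ defined on subsets S of ∪_i T_i by f̂(S) = min { Σ_{j=1}^r f_{i_j} : S ⊆ ∪_{j=1}^r T_{i_j} } is a monotone subadditive extension of H on subsets of ∪_i T_i. -/
/-- under the covering condition, the minimum-cover function `f̂`
is a monotone subadditive extension of the partial function on subsets of `⋃ᵢ Tᵢ`. -/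
theorem roof_is_monotone_subadditive_extension (m n : ℕ)
    (T : Fin n → Finset (Fin m)) (f : Fin n → ℝ) (hf : ∀ i, 0 ≤ f i)
    (hcond : ∀ (r : ℕ), 0 < r → ∀ (idx : Fin r → Fin n) (i' : Fin n),
      T i' ⊆ Finset.univ.biUnion (fun j => T (idx j)) → f i' ≤ ∑ j, f (idx j))
    (U : Finset (Fin m)) (hU : U = Finset.univ.biUnion T)
    (fhat : Finset (Fin m) → ℝ)
    (hfhat : ∀ S : Finset (Fin m), S ⊆ U →
      fhat S = sInf {x : ℝ | ∃ (r : ℕ) (_ : 0 < r) (idx : Fin r → Fin n),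
        S ⊆ Finset.univ.biUnion (fun j => T (idx j)) ∧ x = ∑ j, f (idx j)}) :
    (∀ i, fhat (T i) = f i) ∧
    (∀ A B : Finset (Fin m), A ⊆ U → B ⊆ A → fhat B ≤ fhat A) ∧
    (∀ A B : Finset (Fin m), A ⊆ U → B ⊆ U → fhat (A ∪ B) ≤ fhat A + fhat B) := by
  set C : Finset (Fin m) → Set ℝ := fun S =>
    {x : ℝ | ∃ (r : ℕ) (_ : 0 < r) (idx : Fin r → Fin n),
      S ⊆ Finset.univ.biUnion (fun j => T (idx j)) ∧ x = ∑ j, f (idx j)} with hC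
  have hbdd : ∀ S, BddBelow (C S) := by
    intro S
    refine ⟨0, ?_⟩
    rintro x ⟨r, hr, idx, hcov, rfl⟩
    exact Finset.sum_nonneg fun j _ => hf _
  rcases Nat.eq_zero_or_pos n with hn | hn
  · -- n = 0 : everything is trivial
    subst hn
    have h0 : ∀ S, S ⊆ U → fhat S = 0 := by
      intro S hS
      rw [hfhat S hS]
      have h : C S = ∅ := by
        rw [Set.eq_empty_iff_forall_notMem]
        rintro x ⟨r, hr, idx, -, -⟩
        exact (idx ⟨0, hr⟩).elim0
      show sInf (C S) = 0
      rw [h, Real.sInf_empty]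
    refine ⟨fun i => i.elim0, ?_, ?_⟩
    · intro A B hA hB
      rw [h0 A hA, h0 B (hB.trans hA)]
    · intro A B hA hB
      rw [h0 A hA, h0 B hB, h0 (A ∪ B) (Finset.union_subset hA hB), add_zero]
  · -- n > 0
    have hne : ∀ S, S ⊆ U → (C S).Nonempty := by
      intro S hS
      refine ⟨∑ j : Fin n, f j, n, hn, id, ?_, rfl⟩
      rw [hU] at hS
      simpa using hS
    refine ⟨?_, ?_, ?_⟩
    · intro i
      have hTi : T i ⊆ U := by
        rw [hU]; intro a ha
        exact Finset.mem_biUnion.mpr ⟨i, Finset.mem_univ i, ha⟩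
      rw [hfhat _ hTi]
      apply le_antisymm
      · apply csInf_le (hbdd _)
        exact ⟨1, one_pos, fun _ => i, by simp, by simp⟩
      · apply le_csInf (hne _ hTi)
        rintro x ⟨r, hr, idx, hcov, rfl⟩
        exact hcond r hr idx i hcov
    · intro A B hA hB
      rw [hfhat A hA, hfhat B (hB.trans hA)]
      apply csInf_le_csInf (hbdd _) (hne _ hA)
      rintro x ⟨r, hr, idx, hcov, rfl⟩
      exact ⟨r, hr, idx, hB.trans hcov, rfl⟩
    · intro A B hA hB
      have hAB : A ∪ B ⊆ U := Finset.union_subset hA hB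
      rw [hfhat A hA, hfhat B hB, hfhat _ hAB]
      rw [← sub_le_iff_le_add']
      apply le_csInf (hne _ hB)
      rintro y ⟨r₂, h₂, idx₂, hc₂, rfl⟩
      rw [sub_le_iff_le_add']
      rw [← sub_le_iff_le_add]
      apply le_csInf (hne _ hA)
      rintro x ⟨r₁, h₁, idx₁, hc₁, rfl⟩
      rw [sub_le_iff_le_add']
      apply csInf_le (hbdd _)
      refine ⟨r₁ + r₂, Nat.add_pos_left h₁ _, Fin.append idx₁ idx₂, ?_, ?_⟩
      · intro a ha
        rcases Finset.mem_union.mp ha with h | h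
        · obtain ⟨j, -, hj⟩ := Finset.mem_biUnion.mp (hc₁ h)
          exact Finset.mem_biUnion.mpr ⟨Fin.castAdd r₂ j, Finset.mem_univ _,
            by rwa [Fin.append_left]⟩
        · obtain ⟨j, -, hj⟩ := Finset.mem_biUnion.mp (hc₂ h)
          exact Finset.mem_biUnion.mpr ⟨Fin.natAdd r₁ j, Finset.mem_univ _,
            by rwa [Fin.append_right]⟩
      · rw [Fin.sum_univ_add]
        simp [Fin.append_left, Fin.append_right, add_comm]
end

section
/- A partial function H = {(T_1,f_1),...,(T_n,f_n)} (with T_i ⊆ [m], f_i ≥ 0) is extendible to a fractionally subadditive (XOS) function if and only if for every index i and all nonnegative reals α_1,...,α_n such that for each element s ∈ T_i, Σ_{j : s ∈ T_j} α_j ≥ 1, we have f_i ≤ Σ_{j=1}^n α_j f_j. -/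
open Finset

section XOSAux

variable {m n : ℕ}

/-- Augmented family: the given sets plus the full set. -/
def xosS' (T : Fin n → Finset (Fin m)) : Option (Fin n) → Finset (Fin m)
  | none => Finset.univ
  | some j => T j

/-- Values: `f j` on the given sets, `∑ f` on the full set. -/
def xosV (f : Fin n → ℝ) : Option (Fin n) → ℝ
  | none => ∑ j, f j
  | some j => f j

def xosCost (f : Fin n → ℝ) (β : Option (Fin n) → ℝ) : ℝ :=
  ∑ k, β k * xosV f k

def xosFeas (T : Fin n → Finset (Fin m)) (A : Finset (Fin m))
    (β : Option (Fin n) → ℝ) : Prop :=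
  (∀ k, 0 ≤ β k) ∧
    ∀ s ∈ A, 1 ≤ ∑ k ∈ Finset.univ.filter (fun k => s ∈ xosS' T k), β k

/-- The candidate extension: infimum cost of a fractional cover. -/
noncomputable def xosG (T : Fin n → Finset (Fin m)) (f : Fin n → ℝ)
    (A : Finset (Fin m)) : ℝ :=
  sInf (xosCost f '' {β | xosFeas T A β})

lemma xosV_nonneg (f : Fin n → ℝ) (hf : ∀ i, 0 ≤ f i) (k : Option (Fin n)) :
    0 ≤ xosV f k := by
  cases k with
  | none => exact Finset.sum_nonneg fun j _ => hf j
  | some j => exact hf j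

lemma xosCost_nonneg (f : Fin n → ℝ) (hf : ∀ i, 0 ≤ f i)
    (β : Option (Fin n) → ℝ) (hβ : ∀ k, 0 ≤ β k) : 0 ≤ xosCost f β :=
  Finset.sum_nonneg fun k _ => mul_nonneg (hβ k) (xosV_nonneg f hf k)

lemma xosFeas_default (T : Fin n → Finset (Fin m)) (A : Finset (Fin m)) :
    xosFeas T A (fun k => if k = none then 1 else 0) := by
  constructor
  · intro k; by_cases hk : k = none <;> simp [hk]
  · intro s _
    have hmem : (none : Option (Fin n)) ∈
        Finset.univ.filter (fun k => s ∈ xosS' T k) := by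
      rw [Finset.mem_filter]; exact ⟨Finset.mem_univ _, Finset.mem_univ _⟩
    calc (1 : ℝ) = (fun k => if k = none then (1:ℝ) else 0) none := by simp
    _ ≤ _ := Finset.single_le_sum (f := fun k => if k = none then (1:ℝ) else 0)
        (fun k _ => by by_cases hk : k = none <;> simp [hk]) hmem

lemma xos_nonempty (T : Fin n → Finset (Fin m)) (f : Fin n → ℝ)
    (A : Finset (Fin m)) : (xosCost f '' {β | xosFeas T A β}).Nonempty :=
  ⟨_, ⟨_, xosFeas_default T A, rfl⟩⟩

lemma xos_bddBelow (T : Fin n → Finset (Fin m)) (f : Fin n → ℝ)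
    (hf : ∀ i, 0 ≤ f i) (A : Finset (Fin m)) :
    BddBelow (xosCost f '' {β | xosFeas T A β}) := by
  refine ⟨0, ?_⟩
  rintro x ⟨β, hβ, rfl⟩
  exact xosCost_nonneg f hf β hβ.1

lemma xosG_le (T : Fin n → Finset (Fin m)) (f : Fin n → ℝ)
    (hf : ∀ i, 0 ≤ f i) (A : Finset (Fin m)) (β : Option (Fin n) → ℝ)
    (hβ : xosFeas T A β) : xosG T f A ≤ xosCost f β :=
  csInf_le (xos_bddBelow T f hf A) ⟨β, hβ, rfl⟩

lemma le_xosG (T : Fin n → Finset (Fin m)) (f : Fin n → ℝ)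
    (A : Finset (Fin m)) (c : ℝ)
    (h : ∀ β, xosFeas T A β → c ≤ xosCost f β) : c ≤ xosG T f A := by
  refine le_csInf (xos_nonempty T f A) ?_
  rintro x ⟨β, hβ, rfl⟩
  exact h β hβ

lemma xosG_nonneg (T : Fin n → Finset (Fin m)) (f : Fin n → ℝ)
    (hf : ∀ i, 0 ≤ f i) (A : Finset (Fin m)) : 0 ≤ xosG T f A :=
  le_xosG T f A 0 fun β hβ => xosCost_nonneg f hf β hβ.1

/-- Splitting the covering sum over the option index. -/
lemma xos_cover_split (T : Fin n → Finset (Fin m)) (β : Option (Fin n) → ℝ)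
    (s : Fin m) :
    ∑ k ∈ Finset.univ.filter (fun k => s ∈ xosS' T k), β k
      = β none + ∑ j ∈ Finset.univ.filter (fun j => s ∈ T j), β (some j) := by
  rw [Finset.sum_filter, Finset.sum_filter, Fintype.sum_option]
  simp [xosS']
  exact Finset.sum_congr rfl fun j _ => by congr

end XOSAux

/-- A partial function is extendible to a fractionally subadditive
(XOS) function iff the fractional covering condition holds. -/
theorem xos_extension_iff (m n : ℕ) (T : Fin n → Finset (Fin m))
    (f : Fin n → ℝ) (hf : ∀ i, 0 ≤ f i) :
    (∃ g : Finset (Fin m) → ℝ,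
        (∀ S, 0 ≤ g S) ∧
        (∀ (A : Finset (Fin m)) (α : Finset (Fin m) → ℝ),
          (∀ S, 0 ≤ α S) →
          (∀ s ∈ A, 1 ≤ ∑ S ∈ Finset.univ.filter (fun S : Finset (Fin m) => s ∈ S), α S) →
          g A ≤ ∑ S : Finset (Fin m), α S * g S) ∧
        (∀ i, g (T i) = f i)) ↔
      (∀ (i : Fin n) (α : Fin n → ℝ),
        (∀ j, 0 ≤ α j) →
        (∀ s ∈ T i, 1 ≤ ∑ j ∈ Finset.univ.filter (fun j => s ∈ T j), α j) →
        f i ≤ ∑ j, α j * f j) := by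
  constructor
  · -- forward: extension implies covering condition
    rintro ⟨g, hg0, hgsub, hgext⟩ i α hα hcov
    set β : Finset (Fin m) → ℝ :=
      fun S => ∑ j ∈ Finset.univ.filter (fun j => T j = S), α j with hβdef
    have hβ0 : ∀ S, 0 ≤ β S := fun S =>
      Finset.sum_nonneg fun j _ => hα j
    have hswap : ∀ (c : Finset (Fin m) → ℝ),
        ∑ S : Finset (Fin m), β S * c S = ∑ j, α j * c (T j) := by
      intro c
      simp only [hβdef, Finset.sum_mul, Finset.sum_filter]
      rw [Finset.sum_comm]
      apply Finset.sum_congr rfl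
      intro j _
      simp [ite_mul, Finset.sum_ite_eq]
    have hβcov : ∀ s ∈ T i,
        1 ≤ ∑ S ∈ Finset.univ.filter (fun S : Finset (Fin m) => s ∈ S), β S := by
      intro s hs
      have : ∑ S ∈ Finset.univ.filter (fun S : Finset (Fin m) => s ∈ S), β S
          = ∑ j ∈ Finset.univ.filter (fun j => s ∈ T j), α j := by
        rw [Finset.sum_filter]
        simp only [hβdef, Finset.sum_filter]
        have step : ∀ x : Finset (Fin m),
            (if s ∈ x then ∑ a, if T a = x then α a else 0 else 0)
              = ∑ a, if T a = x then (if s ∈ T a then α a else 0) else 0 := by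
          intro x
          by_cases hx : s ∈ x
          · simp only [hx, if_true]
            apply Finset.sum_congr rfl
            intro a _
            by_cases ha : T a = x
            · subst ha; simp [hx]
            · simp [ha]
          · simp only [hx, if_false]
            symm
            apply Finset.sum_eq_zero
            intro a _
            by_cases ha : T a = x
            · subst ha; simp [hx]
            · simp [ha]
        rw [Finset.sum_congr rfl (fun x _ => step x), Finset.sum_comm]
        simp [Finset.sum_ite_eq]
      rw [this]
      exact hcov s hs
    have := hgsub (T i) β hβ0 hβcov
    rw [hgext i] at this
    calc f i ≤ ∑ S : Finset (Fin m), β S * g S := this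
      _ = ∑ j, α j * g (T j) := hswap g
      _ = ∑ j, α j * f j := by
          apply Finset.sum_congr rfl; intro j _; rw [hgext j]
  · -- backward: covering condition implies extension exists
    intro h
    refine ⟨xosG T f, xosG_nonneg T f hf, ?_, ?_⟩
    · -- fractional subadditivity
      intro A α hα hcov
      refine le_of_forall_pos_le_add ?_
      intro ε hε
      -- choose near-optimal covers for each S
      have hchoice : ∀ S : Finset (Fin m), ∃ β, xosFeas T S β ∧
          xosCost f β < xosG T f S + ε / ((2 ^ m : ℕ) * (α S + 1)) := by
        intro S
        have hpos : (0:ℝ) < ε / ((2 ^ m : ℕ) * (α S + 1)) := by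
          apply div_pos hε
          apply mul_pos
          · positivity
          · linarith [hα S]
        have hlt : xosG T f S < xosG T f S + ε / ((2 ^ m : ℕ) * (α S + 1)) := by
          linarith
        obtain ⟨x, ⟨β, hβ, rfl⟩, hxlt⟩ :=
          exists_lt_of_csInf_lt (xos_nonempty T f S) hlt
        exact ⟨β, hβ, hxlt⟩
      choose β hβfeas hβcost using hchoice
      set B : Option (Fin n) → ℝ := fun k => ∑ S : Finset (Fin m), α S * β S k
        with hBdef
      have hBfeas : xosFeas T A B := by
        constructor
        · intro k
          exact Finset.sum_nonneg fun S _ => mul_nonneg (hα S) ((hβfeas S).1 k)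
        · intro s hs
          have key : ∑ S ∈ Finset.univ.filter (fun S : Finset (Fin m) => s ∈ S), α S
              ≤ ∑ k ∈ Finset.univ.filter (fun k => s ∈ xosS' T k), B k := by
            have : ∑ k ∈ Finset.univ.filter (fun k => s ∈ xosS' T k), B k
                = ∑ S : Finset (Fin m),
                    α S * ∑ k ∈ Finset.univ.filter (fun k => s ∈ xosS' T k), β S k := by
              simp only [hBdef]
              rw [Finset.sum_comm]
              simp [Finset.mul_sum]
            rw [this, Finset.sum_filter]
            apply Finset.sum_le_sum
            intro S _
            by_cases hsS : s ∈ S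
            · simp only [hsS, if_true]
              have h1 : 1 ≤ ∑ k ∈ Finset.univ.filter (fun k => s ∈ xosS' T k), β S k :=
                (hβfeas S).2 s hsS
              nlinarith [hα S]
            · simp only [hsS, if_false]
              exact mul_nonneg (hα S)
                (Finset.sum_nonneg fun k _ => (hβfeas S).1 k)
          exact le_trans (hcov s hs) key
      have hGle : xosG T f A ≤ xosCost f B := xosG_le T f hf A B hBfeas
      have hcostB : xosCost f B = ∑ S : Finset (Fin m), α S * xosCost f (β S) := by
        simp only [xosCost, hBdef, Finset.sum_mul]
        rw [Finset.sum_comm]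
        simp [Finset.mul_sum, mul_assoc, mul_add]
      have hbound : ∑ S : Finset (Fin m), α S * xosCost f (β S)
          ≤ (∑ S : Finset (Fin m), α S * xosG T f S) + ε := by
        have hterm : ∀ S : Finset (Fin m), α S * xosCost f (β S)
            ≤ α S * xosG T f S + ε / (2 ^ m : ℕ) := by
          intro S
          have h1 : xosCost f (β S) ≤ xosG T f S + ε / ((2 ^ m : ℕ) * (α S + 1)) :=
            le_of_lt (hβcost S)
          have h2 : α S * xosCost f (β S)
              ≤ α S * (xosG T f S + ε / ((2 ^ m : ℕ) * (α S + 1))) :=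
            mul_le_mul_of_nonneg_left h1 (hα S)
          have h3 : α S * (ε / ((2 ^ m : ℕ) * (α S + 1))) ≤ ε / (2 ^ m : ℕ) := by
            have haS := hα S
            rw [div_mul_eq_div_div]
            set x := ε / (((2 ^ m : ℕ) : ℝ)) with hxdef
            have hx0 : 0 ≤ x := by positivity
            have heq : α S * (x / (α S + 1)) = x * (α S / (α S + 1)) := by ring
            rw [heq]
            have hle1 : α S / (α S + 1) ≤ 1 := by
              rw [div_le_one (by linarith)]; linarith
            nlinarith
          calc α S * xosCost f (β S)
              ≤ α S * xosG T f S + α S * (ε / ((2 ^ m : ℕ) * (α S + 1))) := by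
                rw [← mul_add]; exact h2
            _ ≤ α S * xosG T f S + ε / (2 ^ m : ℕ) := by linarith
        calc ∑ S : Finset (Fin m), α S * xosCost f (β S)
            ≤ ∑ S : Finset (Fin m), (α S * xosG T f S + ε / (2 ^ m : ℕ)) :=
              Finset.sum_le_sum fun S _ => hterm S
          _ = (∑ S : Finset (Fin m), α S * xosG T f S)
              + (Finset.univ.card : ℕ) • (ε / (2 ^ m : ℕ)) := by
              rw [Finset.sum_add_distrib, Finset.sum_const]
          _ ≤ (∑ S : Finset (Fin m), α S * xosG T f S) + ε := by
              have hcard : ((Finset.univ : Finset (Finset (Fin m))).card : ℝ)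
                  = ((2 ^ m : ℕ) : ℝ) := by
                simp [Finset.card_univ, Fintype.card_finset]
              have hfin : ((2 ^ m : ℕ) : ℝ) * (ε / ((2 ^ m : ℕ) : ℝ)) = ε := by
                field_simp
              rw [nsmul_eq_mul, hcard, hfin]
      calc xosG T f A ≤ xosCost f B := hGle
        _ = ∑ S : Finset (Fin m), α S * xosCost f (β S) := hcostB
        _ ≤ (∑ S : Finset (Fin m), α S * xosG T f S) + ε := hbound
    · -- extension property
      intro i
      apply le_antisymm
      · -- xosG (T i) ≤ f i : use indicator of some i
        have hfeas : xosFeas T (T i) (fun k => if k = some i then 1 else 0) := by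
          constructor
          · intro k; by_cases hk : k = some i <;> simp [hk]
          · intro s hs
            have hmem : (some i : Option (Fin n)) ∈
                Finset.univ.filter (fun k => s ∈ xosS' T k) := by
              rw [Finset.mem_filter]; exact ⟨Finset.mem_univ _, hs⟩
            calc (1 : ℝ) = (fun k => if k = some i then (1:ℝ) else 0) (some i) := by
                  simp
              _ ≤ _ := Finset.single_le_sum
                  (f := fun k => if k = some i then (1:ℝ) else 0)
                  (fun k _ => by by_cases hk : k = some i <;> simp [hk]) hmem
        have := xosG_le T f hf (T i) _ hfeas
        have hcosteq : xosCost f (fun k => if k = some i then (1:ℝ) else 0) = f i := by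
          unfold xosCost
          rw [Finset.sum_eq_single (some i)]
          · simp [xosV]
          · intro k _ hk; simp [hk]
          · simp
        rwa [hcosteq] at this
      · -- f i ≤ xosG (T i)
        apply le_xosG
        intro β hβ
        set γ := β none with hγ
        have hsplitcost : xosCost f β
            = γ * (∑ j, f j) + ∑ j, β (some j) * f j := by
          unfold xosCost
          rw [Fintype.sum_option]
          rfl
        by_cases hγ1 : 1 ≤ γ
        · have h1 : f i ≤ ∑ j, f j :=
            Finset.single_le_sum (fun j _ => hf j) (Finset.mem_univ i)
          have h2 : (∑ j, f j) ≤ γ * (∑ j, f j) := by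
            nlinarith [Finset.sum_nonneg (fun j (_ : j ∈ Finset.univ) => hf j)]
          have h3 : 0 ≤ ∑ j, β (some j) * f j :=
            Finset.sum_nonneg fun j _ => mul_nonneg (hβ.1 (some j)) (hf j)
          linarith [hsplitcost]
        · push_neg at hγ1
          have hpos : 0 < 1 - γ := by linarith
          set α : Fin n → ℝ := fun j => β (some j) / (1 - γ) with hαdef
          have hα0 : ∀ j, 0 ≤ α j := fun j =>
            div_nonneg (hβ.1 (some j)) (le_of_lt hpos)
          have hαcov : ∀ s ∈ T i,
              1 ≤ ∑ j ∈ Finset.univ.filter (fun j => s ∈ T j), α j := by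
            intro s hs
            have h1 := hβ.2 s hs
            rw [xos_cover_split] at h1
            have h2 : 1 - γ ≤ ∑ j ∈ Finset.univ.filter (fun j => s ∈ T j),
                β (some j) := by linarith
            have : ∑ j ∈ Finset.univ.filter (fun j => s ∈ T j), α j
                = (∑ j ∈ Finset.univ.filter (fun j => s ∈ T j), β (some j)) / (1 - γ) := by
              simp [hαdef, Finset.sum_div]
            rw [this, le_div_iff₀ hpos, one_mul]
            exact h2
          have hmain := h i α hα0 hαcov
          have hαsum : ∑ j, α j * f j
              = (∑ j, β (some j) * f j) / (1 - γ) := by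
            simp [hαdef, Finset.sum_div, div_mul_eq_mul_div]
          rw [hαsum, le_div_iff₀ hpos] at hmain
          have hγ0 : 0 ≤ γ := hβ.1 none
          have h1 : f i ≤ ∑ j, f j :=
            Finset.single_le_sum (fun j _ => hf j) (Finset.mem_univ i)
          nlinarith [hsplitcost]
end

section
/- If D = {T_1,...,T_n} ⊆ 2^[m] is an r-cover free family, then for any values f_1,...,f_n with each f_i ∈ [1, r+1], the partial function {(T_1,f_1),...,(T_n,f_n)} is extendible to a monotone subadditive function on 2^[m]. -/
/-- if the defined sets form an `r`-cover free family, then any values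
in `[1, r+1]` give a partial function extendible to a monotone subadditive function. -/
theorem coverfree_extendible (m n r : ℕ) (T : Fin n → Finset (Fin m))
    (hT : Function.Injective T)
    (hcf : ∀ (s : Finset (Fin n)) (i : Fin n), s.card ≤ r → i ∉ s →
      ¬ T i ⊆ s.biUnion T)
    (f : Fin n → ℝ) (hf : ∀ i, 1 ≤ f i ∧ f i ≤ r + 1) :
    ∃ g : Finset (Fin m) → ℝ,
      (∀ S, 0 ≤ g S) ∧
      (∀ A B : Finset (Fin m), B ⊆ A → g B ≤ g A) ∧
      (∀ A B : Finset (Fin m), g (A ∪ B) ≤ g A + g B) ∧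
      (∀ i, g (T i) = f i) := by
  set cost : Finset (Fin m) → Finset (Fin n) → ℝ :=
    fun S s => (∑ i ∈ s, f i) + (r + 1) * ((S \ s.biUnion T).card : ℝ) with hcost
  have hne : (Finset.univ : Finset (Finset (Fin n))).Nonempty := Finset.univ_nonempty
  set g : Finset (Fin m) → ℝ := fun S => Finset.univ.inf' hne (cost S) with hg
  have hle : ∀ S s, g S ≤ cost S s := fun S s =>
    Finset.inf'_le _ (Finset.mem_univ s)
  have hex : ∀ S, ∃ s, g S = cost S s := by
    intro S
    obtain ⟨s, _, hs⟩ := Finset.exists_mem_eq_inf' hne (cost S)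
    exact ⟨s, hs⟩
  have hcost_nonneg : ∀ S s, 0 ≤ cost S s := by
    intro S s
    have h1 : 0 ≤ ∑ i ∈ s, f i :=
      Finset.sum_nonneg fun i _ => le_trans zero_le_one (hf i).1
    have h2 : (0:ℝ) ≤ (r + 1) * ((S \ s.biUnion T).card : ℝ) := by positivity
    simpa [hcost] using add_nonneg h1 h2
  refine ⟨g, ?_, ?_, ?_, ?_⟩
  · intro S
    obtain ⟨s, hs⟩ := hex S
    rw [hs]; exact hcost_nonneg S s
  · intro A B hBA
    obtain ⟨s, hs⟩ := hex A
    rw [hs]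
    refine le_trans (hle B s) ?_
    have : (B \ s.biUnion T).card ≤ (A \ s.biUnion T).card :=
      Finset.card_le_card (Finset.sdiff_subset_sdiff hBA le_rfl)
    have := (Nat.cast_le (α := ℝ)).2 this
    simp only [hcost]
    nlinarith
  · intro A B
    obtain ⟨sA, hsA⟩ := hex A
    obtain ⟨sB, hsB⟩ := hex B
    rw [hsA, hsB]
    refine le_trans (hle (A ∪ B) (sA ∪ sB)) ?_
    have hsum : (∑ i ∈ sA ∪ sB, f i) ≤ (∑ i ∈ sA, f i) + ∑ i ∈ sB, f i := by
      have h0 : 0 ≤ ∑ i ∈ sA ∩ sB, f i :=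
        Finset.sum_nonneg fun i _ => le_trans zero_le_one (hf i).1
      have := Finset.sum_union_inter (s₁ := sA) (s₂ := sB) (f := f)
      linarith
    have hcard : ((A ∪ B) \ (sA ∪ sB).biUnion T).card ≤
        (A \ sA.biUnion T).card + (B \ sB.biUnion T).card := by
      refine le_trans (Finset.card_le_card ?_) (Finset.card_union_le _ _)
      intro x hx
      simp only [Finset.mem_sdiff, Finset.mem_union, Finset.mem_biUnion] at hx ⊢
      rcases hx.1 with h | h
      · exact Or.inl ⟨h, fun ⟨j, hj, hxj⟩ => hx.2 ⟨j, Or.inl hj, hxj⟩⟩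
      · exact Or.inr ⟨h, fun ⟨j, hj, hxj⟩ => hx.2 ⟨j, Or.inr hj, hxj⟩⟩
    have hcard' := (Nat.cast_le (α := ℝ)).2 hcard
    push_cast at hcard'
    simp only [hcost]
    nlinarith
  · intro i
    have h1 : g (T i) ≤ f i := by
      refine le_trans (hle (T i) {i}) ?_
      simp [hcost, Finset.sdiff_self]
    have h2 : f i ≤ g (T i) := by
      obtain ⟨s, hs⟩ := hex (T i)
      rw [hs]
      have hsum0 : 0 ≤ ∑ j ∈ s, f j :=
        Finset.sum_nonneg fun j _ => le_trans zero_le_one (hf j).1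
      by_cases hi : i ∈ s
      · have : f i ≤ ∑ j ∈ s, f j :=
          Finset.single_le_sum (fun j _ => le_trans zero_le_one (hf j).1) hi
        have h2 : (0:ℝ) ≤ (r + 1) * (((T i) \ s.biUnion T).card : ℝ) := by positivity
        simp only [hcost]; linarith
      · by_cases hc : ((T i) \ s.biUnion T).card = 0
        · have hsub : T i ⊆ s.biUnion T := by
            rw [Finset.card_eq_zero, Finset.sdiff_eq_empty_iff_subset] at hc
            exact hc
          have hcard : r + 1 ≤ s.card := by
            by_contra h
            exact hcf s i (by omega) hi hsub
          have : ((s.card : ℝ)) ≤ ∑ j ∈ s, f j := by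
            have := Finset.card_nsmul_le_sum s f 1 (fun j _ => (hf j).1)
            simpa using this
          have hcr : ((r:ℝ) + 1) ≤ (s.card : ℝ) := by exact_mod_cast hcard
          have h2 : (0:ℝ) ≤ (r + 1) * (((T i) \ s.biUnion T).card : ℝ) := by positivity
          have := (hf i).2
          simp only [hcost]; linarith
        · have h1c : (1:ℝ) ≤ (((T i) \ s.biUnion T).card : ℝ) := by
            exact_mod_cast Nat.one_le_iff_ne_zero.2 hc
          have := (hf i).2
          have : f i ≤ (r + 1) * (((T i) \ s.biUnion T).card : ℝ) := by nlinarith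
          simp only [hcost]; linarith
    linarith
end

section
/- A partial function H = {(T_1,f_1),...,(T_n,f_n)} with T_i ⊆ [m] and f_i ∈ ℝ is extendible to a (not necessarily monotone) subadditive function f: 2^[m] → ℝ if and only if for all indices i_1,...,i_r such that T_{i_1} ∪ ... ∪ T_{i_r} = T_{i'} for some i' ∈ [n], we have f_{i_1} + ... + f_{i_r} ≥ f_{i'}. -/
open Finset

/-- extendibility to a (not necessarily monotone) subadditive function. -/
theorem general_subadditive_extension_iff (m n : ℕ) (T : Fin n → Finset (Fin m))
    (f : Fin n → ℝ) :
    (∃ g : Finset (Fin m) → ℝ,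
        (∀ A B : Finset (Fin m), g (A ∪ B) ≤ g A + g B) ∧
        (∀ i, g (T i) = f i)) ↔
      (∀ (r : ℕ), 0 < r → ∀ (idx : Fin r → Fin n) (i' : Fin n),
        Finset.univ.biUnion (fun j => T (idx j)) = T i' →
        f i' ≤ ∑ j, f (idx j)) := by
  constructor
  · rintro ⟨g, hsub, hext⟩ r hr idx i' hunion
    have key : ∀ (s : Finset (Fin r)), s.Nonempty →
        g (s.biUnion fun j => T (idx j)) ≤ ∑ j ∈ s, f (idx j) := by
      intro s hs
      induction hs using Finset.Nonempty.cons_induction with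
      | singleton a => simp [hext]
      | cons a s ha hs ih =>
        rw [Finset.cons_eq_insert, Finset.biUnion_insert, Finset.sum_insert ha]
        calc g _ ≤ g (T (idx a)) + g (s.biUnion fun j => T (idx j)) := hsub _ _
          _ ≤ f (idx a) + ∑ j ∈ s, f (idx j) := by
              rw [hext]; exact add_le_add_right ih _
    have hne : (Finset.univ : Finset (Fin r)).Nonempty := ⟨⟨0, hr⟩, mem_univ _⟩
    calc f i' = g (T i') := (hext i').symm
      _ = g (univ.biUnion fun j => T (idx j)) := by rw [hunion]
      _ ≤ ∑ j, f (idx j) := key _ hne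
  · intro H
    have hf0 : ∀ i, 0 ≤ f i := by
      intro i
      have := H 2 (by norm_num) (fun _ => i) i (by ext x; simp)
      simp [Fin.sum_univ_two] at this
      linarith
    have hcov : ∀ (S : Finset (Fin n)), S.Nonempty → ∀ i', S.biUnion T = T i' →
        f i' ≤ ∑ i ∈ S, f i := by
      intro S hS i' hU
      have hcard : 0 < S.card := hS.card_pos
      set e := S.equivFin.symm with he
      have h1 : (Finset.univ.biUnion fun j : Fin S.card => T ((e j : Fin n))) = S.biUnion T := by
        ext x
        simp only [Finset.mem_biUnion, Finset.mem_univ, true_and]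
        constructor
        · rintro ⟨j, hj⟩; exact ⟨e j, (e j).2, hj⟩
        · rintro ⟨i, hi, hx⟩
          exact ⟨e.symm ⟨i, hi⟩, by simpa using hx⟩
      have h2 : ∑ j : Fin S.card, f ((e j : Fin n)) = ∑ i ∈ S, f i := by
        rw [← Finset.sum_coe_sort S f]
        exact Equiv.sum_comp e (fun i => f (i : Fin n))
      have := H S.card hcard (fun j => (e j : Fin n)) i' (by rw [h1, hU])
      rwa [h2] at this
    classical
    set C : ℝ := ∑ i, f i with hC
    set P : Finset (Fin m) → Finset (Finset (Fin n)) :=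
      fun A => Finset.univ.filter (fun S => S.Nonempty ∧ S.biUnion T = A) with hP
    set g : Finset (Fin m) → ℝ := fun A =>
      if h : (P A).Nonempty then ((P A).image fun S => ∑ i ∈ S, f i).min' (h.image _)
      else C with hg
    have memP : ∀ A S, S ∈ P A ↔ S.Nonempty ∧ S.biUnion T = A := by
      intro A S; simp [hP]
    have g_le : ∀ A S, S ∈ P A → g A ≤ ∑ i ∈ S, f i := by
      intro A S hS
      have hne : (P A).Nonempty := ⟨S, hS⟩
      rw [hg]; simp only [dif_pos hne]
      exact Finset.min'_le _ _ (Finset.mem_image_of_mem _ hS)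
    have g_attain : ∀ A, (P A).Nonempty → ∃ S ∈ P A, g A = ∑ i ∈ S, f i := by
      intro A hne
      have hmem := Finset.min'_mem ((P A).image fun S => ∑ i ∈ S, f i) (hne.image _)
      rw [Finset.mem_image] at hmem
      obtain ⟨S, hS, hval⟩ := hmem
      refine ⟨S, hS, ?_⟩
      rw [hg]; simp only [dif_pos hne]; exact hval.symm
    have sum_le_C : ∀ S : Finset (Fin n), ∑ i ∈ S, f i ≤ C := by
      intro S
      exact Finset.sum_le_sum_of_subset_of_nonneg (Finset.subset_univ S)
        (fun i _ _ => hf0 i)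
    have g_nonneg : ∀ A, 0 ≤ g A := by
      intro A
      by_cases hne : (P A).Nonempty
      · obtain ⟨S, _, hval⟩ := g_attain A hne
        rw [hval]; exact Finset.sum_nonneg (fun i _ => hf0 i)
      · rw [hg]; simp only [dif_neg hne]
        exact Finset.sum_nonneg (fun i _ => hf0 i)
    have g_le_C : ∀ A, g A ≤ C := by
      intro A
      by_cases hne : (P A).Nonempty
      · obtain ⟨S, _, hval⟩ := g_attain A hne
        rw [hval]; exact sum_le_C S
      · rw [hg]; simp only [dif_neg hne]; exact le_refl C
    refine ⟨g, ?_, ?_⟩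
    · intro A B
      by_cases hA : (P A).Nonempty
      · by_cases hB : (P B).Nonempty
        · obtain ⟨SA, hSA, hvA⟩ := g_attain A hA
          obtain ⟨SB, hSB, hvB⟩ := g_attain B hB
          rw [memP] at hSA hSB
          have hmem : SA ∪ SB ∈ P (A ∪ B) := by
            rw [memP]
            refine ⟨hSA.1.mono Finset.subset_union_left, ?_⟩
            rw [← hSA.2, ← hSB.2]
            ext x
            simp only [Finset.mem_biUnion, Finset.mem_union]
            constructor
            · rintro ⟨i, hi | hi, hx⟩
              · exact Or.inl ⟨i, hi, hx⟩
              · exact Or.inr ⟨i, hi, hx⟩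
            · rintro (⟨i, hi, hx⟩ | ⟨i, hi, hx⟩)
              · exact ⟨i, Or.inl hi, hx⟩
              · exact ⟨i, Or.inr hi, hx⟩
          calc g (A ∪ B) ≤ ∑ i ∈ SA ∪ SB, f i := g_le _ _ hmem
            _ ≤ ∑ i ∈ SA, f i + ∑ i ∈ SB, f i := by
                have h := Finset.sum_union_inter (s₁ := SA) (s₂ := SB) (f := f)
                have h0 : 0 ≤ ∑ i ∈ SA ∩ SB, f i :=
                  Finset.sum_nonneg (fun i _ => hf0 i)
                linarith
            _ = g A + g B := by rw [hvA, hvB]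
        · have : g B = C := by rw [hg]; simp only [dif_neg hB]
          calc g (A ∪ B) ≤ C := g_le_C _
            _ = 0 + g B := by rw [this, zero_add]
            _ ≤ g A + g B := add_le_add_left (g_nonneg A) _
      · have : g A = C := by rw [hg]; simp only [dif_neg hA]
        calc g (A ∪ B) ≤ C := g_le_C _
          _ = g A + 0 := by rw [this, add_zero]
          _ ≤ g A + g B := add_le_add_right (g_nonneg B) _
    · intro i
      have hmem : ({i} : Finset (Fin n)) ∈ P (T i) := by
        rw [memP]; exact ⟨Finset.singleton_nonempty i, by simp⟩
      have h1 : g (T i) ≤ f i := by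
        have := g_le (T i) {i} hmem
        simpa using this
      have h2 : f i ≤ g (T i) := by
        obtain ⟨S, hS, hval⟩ := g_attain (T i) ⟨{i}, hmem⟩
        rw [memP] at hS
        rw [hval]
        exact hcov S hS.1 i hS.2
      linarith
end

section
/- Let D ⊆ 2^[m] be an antichain (no set in D contains another). Then for any assignment of real values f: D → ℝ, there exists a submodular function g: 2^[m] → ℝ with g(S) = f(S) for all S ∈ D. -/
/-- any partial function defined on an antichain extends to a
submodular function. -/
theorem antichain_submodular_extension (m : ℕ) (D : Finset (Finset (Fin m)))
    (hD : ∀ A ∈ D, ∀ B ∈ D, A ≠ B → ¬ A ⊆ B)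
    (f : Finset (Fin m) → ℝ) :
    ∃ g : Finset (Fin m) → ℝ,
      (∀ A B : Finset (Fin m), g (A ∪ B) + g (A ∩ B) ≤ g A + g B) ∧
      (∀ S ∈ D, g S = f S) := by
  set C : ℝ := ∑ T ∈ D, |f T| with hCdef
  have hC : ∀ T ∈ D, f T ≤ C := by
    intro T hT
    calc f T ≤ |f T| := le_abs_self _
    _ ≤ C := Finset.single_le_sum (fun i _ => abs_nonneg (f i)) hT
  refine ⟨fun S => C - ∑ T ∈ D, (if T ⊆ S then C - f T else 0), ?_, ?_⟩
  · intro A B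
    have key : ∀ T ∈ D,
        (if T ⊆ A then C - f T else 0) + (if T ⊆ B then C - f T else 0) ≤
        (if T ⊆ A ∪ B then C - f T else 0) + (if T ⊆ A ∩ B then C - f T else 0) := by
      intro T hT
      have hw : (0:ℝ) ≤ C - f T := sub_nonneg.mpr (hC T hT)
      by_cases hA : T ⊆ A <;> by_cases hB : T ⊆ B
      · have hU : T ⊆ A ∪ B := hA.trans Finset.subset_union_left
        have hI : T ⊆ A ∩ B := Finset.subset_inter hA hB
        simp [hA, hB, hU, hI]
      · have hU : T ⊆ A ∪ B := hA.trans Finset.subset_union_left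
        simp only [hA, hB, hU, if_true, if_false, add_zero]
        split <;> linarith
      · have hU : T ⊆ A ∪ B := hB.trans Finset.subset_union_right
        simp only [hA, hB, hU, if_true, if_false, zero_add]
        split <;> linarith
      · simp only [hA, hB, if_false, add_zero]
        split <;> split <;> linarith
    have := Finset.sum_le_sum key
    simp only [Finset.sum_add_distrib] at this
    dsimp only
    linarith
  · intro S hS
    have : ∑ T ∈ D, (if T ⊆ S then C - f T else 0) = C - f S := by
      rw [Finset.sum_eq_single S]
      · simp
      · intro T hT hTS
        have : ¬ T ⊆ S := hD T hT S hS hTS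
        simp [this]
      · intro h; exact absurd hS h
    dsimp only
    rw [this]; ring
end

section
/- A partial function H = {(T_1,f_1),...,(T_n,f_n)} on subsets of [m] is extendible to a submodular function on 2^[m] if and only if there does not exist a square certificate for H. -/
/-- The number of times `S` occurs as a middle point of a multiset of square tuples,
each square tuple being recorded by its pair of middle sets `(A, B)`. -/
def midCount {m : ℕ} (C : Multiset (Finset (Fin m) × Finset (Fin m)))
    (S : Finset (Fin m)) : ℕ :=
  (C.map (fun p => (if p.1 = S then 1 else 0) + (if p.2 = S then 1 else 0))).sum

/-- The number of times `S` occurs as a top or bottom point of a multiset of square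
tuples. -/
def tbCount {m : ℕ} (C : Multiset (Finset (Fin m) × Finset (Fin m)))
    (S : Finset (Fin m)) : ℕ :=
  (C.map (fun p => (if p.1 ∪ p.2 = S then 1 else 0) + (if p.1 ∩ p.2 = S then 1 else 0))).sum

/-- A square certificate for the partial function `(T, f)`: (P1) every set occurring
a different number of times as a middle point than as a top/bottom point is a defined
point, and (P2) `Σᵢ fᵢ (tb(Tᵢ) − m(Tᵢ)) > 0`. -/
def IsSquareCertificate {m n : ℕ} (T : Fin n → Finset (Fin m)) (f : Fin n → ℝ)
    (C : Multiset (Finset (Fin m) × Finset (Fin m))) : Prop :=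
  (∀ S : Finset (Fin m), midCount C S ≠ tbCount C S → ∃ i, T i = S) ∧
  0 < ∑ i, f i * ((tbCount C (T i) : ℝ) - (midCount C (T i) : ℝ))


theorem farkasQR (k : ℕ) :
    ∀ (ι ρ : Type) [Fintype ι] [Fintype ρ] (A : ρ → ι → ℚ) (b : ρ → ℝ),
      Fintype.card ι = k →
      (∃ x : ι → ℝ, ∀ r, ∑ i, (A r i : ℝ) * x i ≤ b r) ∨
      (∃ y : ρ → ℚ, (∀ r, 0 ≤ y r) ∧ (∀ i, ∑ r, y r * A r i = 0) ∧
        ∑ r, (y r : ℝ) * b r < 0) := by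
  induction k with
  | zero =>
    intro ι ρ _ _ A b hcard
    have hie : IsEmpty ι := Fintype.card_eq_zero_iff.mp hcard
    by_cases hb : ∀ r, 0 ≤ b r
    · left
      exact ⟨0, fun r => by simpa [Finset.univ_eq_empty] using hb r⟩
    · right
      push_neg at hb
      obtain ⟨r₀, hr₀⟩ := hb
      classical
      refine ⟨fun r => if r = r₀ then 1 else 0, ?_, fun i => hie.elim i, ?_⟩
      · intro r; by_cases h : r = r₀ <;> simp [h]
      · simpa [apply_ite, ite_mul] using hr₀
  | succ k IH =>
    intro ι ρ _ _ A b hcard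
    classical
    have hne : Nonempty ι := Fintype.card_pos_iff.mp (by omega)
    obtain ⟨i₀⟩ := hne
    set ι' := {i : ι // i ≠ i₀} with hι'
    have hcard' : Fintype.card ι' = k := by
      have h1 := Fintype.card_subtype_compl (fun i : ι => i = i₀)
      rw [Fintype.card_subtype_eq i₀] at h1
      have h2 : Fintype.card ι' = Fintype.card {i : ι // ¬ i = i₀} := rfl
      omega
    set a : ρ → ℚ := fun r => A r i₀ with ha
    set ρ' := ({r : ρ // a r = 0} ⊕ {r : ρ // 0 < a r} × {r : ρ // a r < 0}) with hρ'
    set A' : ρ' → ι' → ℚ := fun c j =>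
      Sum.elim (fun z : {r : ρ // a r = 0} => A z.1 j.1)
        (fun ps : {r : ρ // 0 < a r} × {r : ρ // a r < 0} =>
          (-a ps.2.1) * A ps.1.1 j.1 + a ps.1.1 * A ps.2.1 j.1) c with hA'
    set b' : ρ' → ℝ := fun c =>
      Sum.elim (fun z : {r : ρ // a r = 0} => b z.1)
        (fun ps : {r : ρ // 0 < a r} × {r : ρ // a r < 0} =>
          (-(a ps.2.1 : ℝ)) * b ps.1.1 + (a ps.1.1 : ℝ) * b ps.2.1) c with hb'
    have hsplit : ∀ F : ι → ℝ, ∑ i, F i = F i₀ + ∑ j : ι', F j.1 := by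
      intro F
      have h1 : ∑ i ∈ Finset.univ.erase i₀, F i + F i₀ = ∑ i, F i :=
        Finset.sum_erase_add _ _ (Finset.mem_univ i₀)
      have h2 : ∑ i ∈ Finset.univ.erase i₀, F i = ∑ j : ι', F j.1 := by
        apply Finset.sum_subtype
        intro x; simp [Finset.mem_erase]
      rw [← h1, h2]; ring
    rcases IH ι' ρ' A' b' hcard' with ⟨x', hx'⟩ | ⟨y', hy0, hyA, hyb⟩
    · -- feasible case
      left
      set B : ρ → ℝ := fun r => b r - ∑ j : ι', (A r j.1 : ℝ) * x' j with hB
      have hZ : ∀ r : ρ, a r = 0 → 0 ≤ B r := by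
        intro r hr
        have := hx' (Sum.inl ⟨r, hr⟩)
        simp only [hA', hb', Sum.elim_inl] at this
        simp only [hB]
        linarith
      have hPN : ∀ (p : {r : ρ // 0 < a r}) (s : {r : ρ // a r < 0}),
          0 ≤ (-(a s.1 : ℝ)) * B p.1 + (a p.1 : ℝ) * B s.1 := by
        intro p s
        have h0 := hx' (Sum.inr (p, s))
        simp only [hA', hb', Sum.elim_inr, Rat.cast_add, Rat.cast_mul, Rat.cast_neg] at h0
        have expand : ∑ x : ι', (-(a s.1 : ℝ) * (A p.1 x.1 : ℝ) + (a p.1 : ℝ) * (A s.1 x.1 : ℝ)) * x' x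
            = (-(a s.1 : ℝ)) * ∑ j : ι', (A p.1 j.1 : ℝ) * x' j
              + (a p.1 : ℝ) * ∑ j : ι', (A s.1 j.1 : ℝ) * x' j := by
          rw [Finset.mul_sum, Finset.mul_sum, ← Finset.sum_add_distrib]
          exact Finset.sum_congr rfl (fun j _ => by ring)
        rw [expand] at h0
        simp only [hB]
        linarith
      have main : ∃ x₀ : ℝ, ∀ r : ρ, (a r : ℝ) * x₀ ≤ B r := by
        by_cases hP : Nonempty {r : ρ // 0 < a r}
        · have hPuniv : (Finset.univ : Finset {r : ρ // 0 < a r}).Nonempty :=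
            Finset.univ_nonempty
          obtain ⟨q, _, hqeq⟩ := Finset.exists_mem_eq_inf' hPuniv (fun p => B p.1 / (a p.1 : ℝ))
          refine ⟨Finset.univ.inf' hPuniv (fun p => B p.1 / (a p.1 : ℝ)), ?_⟩
          intro r
          rcases lt_trichotomy (a r) 0 with hr | hr | hr
          · rw [hqeq]
            have haq : (0:ℝ) < (a q.1 : ℝ) := by exact_mod_cast q.2
            have har : (a r : ℝ) < 0 := by exact_mod_cast hr
            have hpair : 0 ≤ (-(a r : ℝ)) * B q.1 + (a q.1 : ℝ) * B r := hPN q ⟨r, hr⟩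
            have hdiv : (a q.1 : ℝ) * (B q.1 / (a q.1 : ℝ)) = B q.1 :=
              mul_div_cancel₀ _ (ne_of_gt haq)
            have hexp : (a q.1 : ℝ) * (B r - (a r : ℝ) * (B q.1 / (a q.1 : ℝ)))
                = -(a r : ℝ) * ((a q.1 : ℝ) * (B q.1 / (a q.1 : ℝ))) + (a q.1 : ℝ) * B r := by
              ring
            rw [hdiv] at hexp
            have h3 : 0 ≤ (a q.1 : ℝ) * (B r - (a r : ℝ) * (B q.1 / (a q.1 : ℝ))) := by
              rw [hexp]; exact hpair
            have h4 := (mul_nonneg_iff_of_pos_left haq).mp h3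
            linarith
          · rw [hr]; push_cast; simpa using hZ r hr
          · have hle : Finset.univ.inf' hPuniv (fun p => B p.1 / (a p.1 : ℝ))
                ≤ B r / (a r : ℝ) :=
              Finset.inf'_le _ (Finset.mem_univ (⟨r, hr⟩ : {r : ρ // 0 < a r}))
            have har : (0:ℝ) < (a r : ℝ) := by exact_mod_cast hr
            calc (a r : ℝ) * Finset.univ.inf' hPuniv (fun p => B p.1 / (a p.1 : ℝ))
                ≤ (a r : ℝ) * (B r / (a r : ℝ)) :=
                  mul_le_mul_of_nonneg_left hle (le_of_lt har)
              _ = B r := mul_div_cancel₀ _ (ne_of_gt har)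
        · by_cases hN : Nonempty {r : ρ // a r < 0}
          · have hNuniv : (Finset.univ : Finset {r : ρ // a r < 0}).Nonempty :=
              Finset.univ_nonempty
            refine ⟨Finset.univ.sup' hNuniv (fun s => B s.1 / (a s.1 : ℝ)), ?_⟩
            intro r
            rcases lt_trichotomy (a r) 0 with hr | hr | hr
            · have hge : B r / (a r : ℝ)
                  ≤ Finset.univ.sup' hNuniv (fun s => B s.1 / (a s.1 : ℝ)) :=
                Finset.le_sup' (fun s : {r : ρ // a r < 0} => B s.1 / (a s.1 : ℝ))
                  (Finset.mem_univ (⟨r, hr⟩ : {r : ρ // a r < 0}))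
              have har : (a r : ℝ) < 0 := by exact_mod_cast hr
              calc (a r : ℝ) * Finset.univ.sup' hNuniv (fun s => B s.1 / (a s.1 : ℝ))
                  ≤ (a r : ℝ) * (B r / (a r : ℝ)) :=
                    mul_le_mul_of_nonpos_left hge (le_of_lt har)
                _ = B r := mul_div_cancel₀ _ (ne_of_lt har)
            · rw [hr]; push_cast; simpa using hZ r hr
            · exact absurd ⟨⟨r, hr⟩⟩ hP
          · refine ⟨0, fun r => ?_⟩
            rcases lt_trichotomy (a r) 0 with hr | hr | hr
            · exact absurd ⟨⟨r, hr⟩⟩ hN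
            · rw [hr]; push_cast; simpa using hZ r hr
            · exact absurd ⟨⟨r, hr⟩⟩ hP
      obtain ⟨x₀, hx₀⟩ := main
      refine ⟨fun i => if h : i = i₀ then x₀ else x' ⟨i, h⟩, fun r => ?_⟩
      have hrest : ∑ j : ι', (A r j.1 : ℝ) * (if h : j.1 = i₀ then x₀ else x' ⟨j.1, h⟩)
          = ∑ j : ι', (A r j.1 : ℝ) * x' j := by
        refine Finset.sum_congr rfl fun j _ => ?_
        rw [dif_neg j.2]
      have goal_eq : ∑ i, (A r i : ℝ) * (if h : i = i₀ then x₀ else x' ⟨i, h⟩)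
          = (A r i₀ : ℝ) * x₀ + ∑ j : ι', (A r j.1 : ℝ) * x' j := by
        rw [hsplit (fun i => (A r i : ℝ) * (if h : i = i₀ then x₀ else x' ⟨i, h⟩))]
        exact congrArg₂ (· + ·) (by simp) hrest
      rw [goal_eq]
      have hthis := hx₀ r
      simp only [hB] at hthis
      have haa : ((a r : ℚ) : ℝ) = ((A r i₀ : ℚ) : ℝ) := rfl
      rw [haa] at hthis
      linarith
    · -- infeasible case: build certificate
      right
      set coeff : ρ' → ρ → ℚ := fun c r =>
        Sum.elim (fun z : {r : ρ // a r = 0} => if z.1 = r then 1 else 0)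
          (fun ps : {r : ρ // 0 < a r} × {r : ρ // a r < 0} =>
            (if ps.1.1 = r then -a ps.2.1 else 0) + (if ps.2.1 = r then a ps.1.1 else 0)) c
        with hcoeff
      set y : ρ → ℚ := fun r => ∑ c : ρ', y' c * coeff c r with hy
      have hswap : ∀ G : ρ → ℝ,
          (∑ r, (y r : ℝ) * G r) = ∑ c : ρ', (y' c : ℝ) *
            Sum.elim (fun z : {r : ρ // a r = 0} => G z.1)
              (fun ps : {r : ρ // 0 < a r} × {r : ρ // a r < 0} =>
                (-(a ps.2.1 : ℝ)) * G ps.1.1 + (a ps.1.1 : ℝ) * G ps.2.1) c := by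
        intro G
        have h1 : ∀ r, (y r : ℝ) = ∑ c : ρ', (y' c : ℝ) * (coeff c r : ℝ) := by
          intro r; rw [hy]; push_cast; rfl
        calc ∑ r, (y r : ℝ) * G r
            = ∑ r, ∑ c : ρ', (y' c : ℝ) * (coeff c r : ℝ) * G r := by
              refine Finset.sum_congr rfl fun r _ => ?_
              rw [h1 r, Finset.sum_mul]
          _ = ∑ c : ρ', ∑ r, (y' c : ℝ) * (coeff c r : ℝ) * G r := Finset.sum_comm
          _ = ∑ c : ρ', (y' c : ℝ) * ∑ r, (coeff c r : ℝ) * G r := by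
              refine Finset.sum_congr rfl fun c _ => ?_
              rw [Finset.mul_sum]
              exact Finset.sum_congr rfl fun r _ => by ring
          _ = _ := by
              refine Finset.sum_congr rfl fun c _ => ?_
              congr 1
              rcases c with z | ps
              · have hc : ∀ r, ((coeff (Sum.inl z) r : ℚ) : ℝ) * G r
                    = if z.1 = r then G r else 0 := by
                  intro r
                  have he : coeff (Sum.inl z) r = if z.1 = r then 1 else 0 := rfl
                  rw [he]; split <;> simp
                rw [Finset.sum_congr rfl fun r _ => hc r, Finset.sum_ite_eq]
                simp
              · have hc : ∀ r, ((coeff (Sum.inr ps) r : ℚ) : ℝ) * G r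
                    = (if ps.1.1 = r then (-(a ps.2.1 : ℝ)) * G r else 0)
                      + (if ps.2.1 = r then (a ps.1.1 : ℝ) * G r else 0) := by
                  intro r
                  have he : coeff (Sum.inr ps) r
                      = (if ps.1.1 = r then -a ps.2.1 else 0)
                        + (if ps.2.1 = r then a ps.1.1 else 0) := rfl
                  rw [he]; split_ifs <;> push_cast <;> ring
                rw [Finset.sum_congr rfl fun r _ => hc r, Finset.sum_add_distrib,
                  Finset.sum_ite_eq, Finset.sum_ite_eq]
                simp
      refine ⟨y, ?_, ?_, ?_⟩
      · intro r
        rw [hy]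
        refine Finset.sum_nonneg fun c _ => mul_nonneg (hy0 c) ?_
        rcases c with z | ps
        · simp only [hcoeff, Sum.elim_inl]
          split <;> norm_num
        · simp only [hcoeff, Sum.elim_inr]
          have h1 : (0:ℚ) ≤ -a ps.2.1 := by linarith [ps.2.2]
          have h2 : (0:ℚ) ≤ a ps.1.1 := le_of_lt ps.1.2
          refine add_nonneg ?_ ?_ <;> split <;> simp [h1, h2]
      · intro i
        have key : ((∑ r, y r * A r i : ℚ) : ℝ) = 0 := by
          push_cast
          rw [hswap (fun r => (A r i : ℝ))]
          by_cases hi : i = i₀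
          · apply Finset.sum_eq_zero
            intro c _
            rcases c with z | ps
            · simp only [Sum.elim_inl]
              have hz : (A z.1 i : ℚ) = 0 := by rw [hi]; exact z.2
              rw [show ((A z.1 i : ℚ) : ℝ) = 0 from by exact_mod_cast hz, mul_zero]
            · simp only [Sum.elim_inr]
              have e1 : (A ps.1.1 i : ℚ) = a ps.1.1 := by rw [hi]
              have e2 : (A ps.2.1 i : ℚ) = a ps.2.1 := by rw [hi]
              have hz : (-(a ps.2.1 : ℝ)) * (A ps.1.1 i : ℝ) + (a ps.1.1 : ℝ) * (A ps.2.1 i : ℝ)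
                  = 0 := by
                rw [show ((A ps.1.1 i : ℚ) : ℝ) = (a ps.1.1 : ℝ) from by exact_mod_cast e1,
                  show ((A ps.2.1 i : ℚ) : ℝ) = (a ps.2.1 : ℝ) from by exact_mod_cast e2]
                ring
              rw [hz, mul_zero]
          · have h2 : ((∑ c : ρ', y' c * A' c ⟨i, hi⟩ : ℚ) : ℝ) = 0 := by
              exact_mod_cast congrArg (fun q : ℚ => (q : ℝ)) (hyA ⟨i, hi⟩)
            rw [← h2]
            push_cast
            refine Finset.sum_congr rfl fun c _ => ?_
            rcases c with z | ps
            · rfl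
            · simp only [hA', Sum.elim_inr]
              push_cast
              ring
        exact_mod_cast key
      · rw [hswap b]
        exact hyb

section Helpers

variable {α β : Type*}

lemma map_multiset_sum_nat (s : Finset α) (g : α → Multiset β) (φ : β → ℕ) :
    ((∑ a ∈ s, g a).map φ).sum = ∑ a ∈ s, ((g a).map φ).sum := by
  classical
  induction s using Finset.induction_on with
  | empty => simp
  | insert _ _ h ih => simp [Finset.sum_insert h, ih]

lemma multiset_map_finset_sum (C : Multiset α) (s : Finset β)
    {γ : Type*} [AddCommMonoid γ] (F : α → β → γ) :
    (C.map fun a => ∑ x ∈ s, F a x).sum = ∑ x ∈ s, (C.map fun a => F a x).sum := by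
  induction C using Multiset.induction_on with
  | empty => simp
  | cons p C ih => simp [ih, Finset.sum_add_distrib]

lemma multiset_map_sum_nonpos (C : Multiset α) (h : α → ℝ) (H : ∀ a, h a ≤ 0) :
    (C.map h).sum ≤ 0 := by
  induction C using Multiset.induction_on with
  | empty => simp
  | cons p C ih => simp only [Multiset.map_cons, Multiset.sum_cons]; linarith [H p]

lemma multiset_count_cast {K : Type*} [Semiring K] (C : Multiset α) (φ : α → ℕ) :
    (((C.map φ).sum : ℕ) : K) = (C.map fun a => ((φ a : ℕ) : K)).sum := by
  induction C using Multiset.induction_on with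
  | empty => simp
  | cons p C ih => simp [ih]

end Helpers

section MoreHelpers
variable {α : Type*}

lemma multiset_map_sum_mul (C : Multiset α) (F : α → ℝ) (c : ℝ) :
    (C.map F).sum * c = (C.map fun a => F a * c).sum := by
  induction C using Multiset.induction_on with
  | empty => simp
  | cons p C ih => simp only [Multiset.map_cons, Multiset.sum_cons, add_mul, ih]

lemma multiset_map_sum_sub (C : Multiset α) (F G : α → ℝ) :
    (C.map F).sum - (C.map G).sum = (C.map fun a => F a - G a).sum := by
  induction C using Multiset.induction_on with
  | empty => simp
  | cons p C ih => simp only [Multiset.map_cons, Multiset.sum_cons, ← ih]; ring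

end MoreHelpers
/-- a partial function is extendible to a submodular function on the
hypercube iff there is no square certificate for it. -/
theorem submodular_extension_iff_no_square_certificate (m n : ℕ)
    (T : Fin n → Finset (Fin m)) (f : Fin n → ℝ) (hT : Function.Injective T) :
    (∃ g : Finset (Fin m) → ℝ,
        (∀ A B : Finset (Fin m), g (A ∪ B) + g (A ∩ B) ≤ g A + g B) ∧
        (∀ i, g (T i) = f i)) ↔
      ¬ ∃ C : Multiset (Finset (Fin m) × Finset (Fin m)), IsSquareCertificate T f C := by
  classical
  constructor
  · -- extension implies no certificate
    rintro ⟨g, hsub, hext⟩ ⟨C, hP1, hP2⟩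
    set rowR : (Finset (Fin m) × Finset (Fin m)) → Finset (Fin m) → ℝ := fun p S =>
      ((if p.1 ∪ p.2 = S then (1:ℝ) else 0) + (if p.1 ∩ p.2 = S then 1 else 0))
        - ((if p.1 = S then 1 else 0) + (if p.2 = S then 1 else 0)) with hrowR
    have hcast : ∀ S, ((tbCount C S : ℝ) - (midCount C S : ℝ))
        = (C.map fun p => rowR p S).sum := by
      intro S
      unfold tbCount midCount
      rw [multiset_count_cast (K := ℝ), multiset_count_cast (K := ℝ), multiset_map_sum_sub]
      refine congrArg Multiset.sum (Multiset.map_congr rfl fun p _ => ?_)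
      simp only [hrowR]
      push_cast [apply_ite (Nat.cast : ℕ → ℝ)]
      ring
    have hpoint : ∀ p : Finset (Fin m) × Finset (Fin m),
        ∑ S : Finset (Fin m), rowR p S * g S
          = g (p.1 ∪ p.2) + g (p.1 ∩ p.2) - g p.1 - g p.2 := by
      intro p
      simp only [hrowR, add_mul, sub_mul, ite_mul, one_mul, zero_mul,
        Finset.sum_sub_distrib, Finset.sum_add_distrib, Finset.sum_ite_eq,
        Finset.mem_univ, if_true]
      ring
    have key2 : ∑ S : Finset (Fin m), ((tbCount C S : ℝ) - midCount C S) * g S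
        = (C.map fun p => g (p.1 ∪ p.2) + g (p.1 ∩ p.2) - g p.1 - g p.2).sum := by
      calc ∑ S : Finset (Fin m), ((tbCount C S : ℝ) - midCount C S) * g S
          = ∑ S : Finset (Fin m), (C.map fun p => rowR p S * g S).sum := by
            refine Finset.sum_congr rfl fun S _ => ?_
            rw [hcast S, multiset_map_sum_mul]
        _ = (C.map fun p => ∑ S : Finset (Fin m), rowR p S * g S).sum :=
            (multiset_map_finset_sum C Finset.univ _).symm
        _ = _ := congrArg Multiset.sum (Multiset.map_congr rfl fun p _ => hpoint p)
    have himg : ∑ S : Finset (Fin m), ((tbCount C S : ℝ) - midCount C S) * g S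
        = ∑ S ∈ Finset.univ.image T, ((tbCount C S : ℝ) - midCount C S) * g S := by
      symm
      apply Finset.sum_subset (Finset.subset_univ _)
      intro S _ hS
      have hmt : midCount C S = tbCount C S := by
        by_contra hne
        obtain ⟨i, hi⟩ := hP1 S hne
        exact hS (Finset.mem_image.mpr ⟨i, Finset.mem_univ i, hi⟩)
      rw [hmt, sub_self, zero_mul]
    have himg2 : ∑ S ∈ Finset.univ.image T, ((tbCount C S : ℝ) - midCount C S) * g S
        = ∑ i, ((tbCount C (T i) : ℝ) - midCount C (T i)) * g (T i) :=
      Finset.sum_image (fun a _ b _ h => hT h)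
    have hP2' : 0 < (C.map fun p => g (p.1 ∪ p.2) + g (p.1 ∩ p.2) - g p.1 - g p.2).sum := by
      rw [← key2, himg, himg2]
      have : ∑ i, ((tbCount C (T i) : ℝ) - midCount C (T i)) * g (T i)
          = ∑ i, f i * ((tbCount C (T i) : ℝ) - (midCount C (T i) : ℝ)) := by
        refine Finset.sum_congr rfl fun i _ => ?_
        rw [hext i]; ring
      rw [this]
      exact hP2
    have hle : (C.map fun p => g (p.1 ∪ p.2) + g (p.1 ∩ p.2) - g p.1 - g p.2).sum ≤ 0 :=
      multiset_map_sum_nonpos _ _ fun p => by linarith [hsub p.1 p.2]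
    linarith
  · -- no certificate implies extension
    intro hnc
    set rowQ : (Finset (Fin m) × Finset (Fin m)) → Finset (Fin m) → ℚ := fun p S =>
      ((if p.1 ∪ p.2 = S then (1:ℚ) else 0) + (if p.1 ∩ p.2 = S then 1 else 0))
        - ((if p.1 = S then 1 else 0) + (if p.2 = S then 1 else 0)) with hrowQ
    set A : ((Finset (Fin m) × Finset (Fin m)) ⊕ (Fin n ⊕ Fin n)) → Finset (Fin m) → ℚ :=
      fun r => Sum.elim (fun p => rowQ p)
        (Sum.elim (fun i S => if T i = S then 1 else 0)
          (fun i S => if T i = S then -1 else 0)) r with hA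
    set b : ((Finset (Fin m) × Finset (Fin m)) ⊕ (Fin n ⊕ Fin n)) → ℝ :=
      fun r => Sum.elim (fun _ => 0) (Sum.elim (fun i => f i) (fun i => -f i)) r with hb
    have heval : ∀ (q : Finset (Fin m)) (g : Finset (Fin m) → ℝ),
        ∑ S : Finset (Fin m), (((if q = S then 1 else 0 : ℚ)) : ℝ) * g S = g q := by
      intro q g
      have h1 : ∀ S, (((if q = S then 1 else 0 : ℚ)) : ℝ) * g S
          = if q = S then g S else 0 := by
        intro S; split <;> simp
      rw [Finset.sum_congr rfl fun S _ => h1 S]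
      simp [Finset.sum_ite_eq]
    have hrow_eval : ∀ (p : Finset (Fin m) × Finset (Fin m)) (g : Finset (Fin m) → ℝ),
        ∑ S : Finset (Fin m), ((rowQ p S : ℚ) : ℝ) * g S
          = g (p.1 ∪ p.2) + g (p.1 ∩ p.2) - g p.1 - g p.2 := by
      intro p g
      have h1 : ∀ S, ((rowQ p S : ℚ) : ℝ) * g S
          = (((if p.1 ∪ p.2 = S then 1 else 0 : ℚ)) : ℝ) * g S
            + (((if p.1 ∩ p.2 = S then 1 else 0 : ℚ)) : ℝ) * g S
            - (((if p.1 = S then 1 else 0 : ℚ)) : ℝ) * g S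
            - (((if p.2 = S then 1 else 0 : ℚ)) : ℝ) * g S := by
        intro S; simp only [hrowQ]; push_cast; ring
      rw [Finset.sum_congr rfl fun S _ => h1 S]
      rw [Finset.sum_sub_distrib, Finset.sum_sub_distrib, Finset.sum_add_distrib,
        heval, heval, heval, heval]
    rcases farkasQR (Fintype.card (Finset (Fin m))) (Finset (Fin m))
      ((Finset (Fin m) × Finset (Fin m)) ⊕ (Fin n ⊕ Fin n)) A b rfl with
      ⟨x, hx⟩ | ⟨y, hy0, hyA, hyb⟩
    · refine ⟨x, fun As Bs => ?_, fun i => ?_⟩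
      · have h1 := hx (Sum.inl (As, Bs))
        have h2 : ∑ S : Finset (Fin m), ((A (Sum.inl (As, Bs)) S : ℚ) : ℝ) * x S
            = x (As ∪ Bs) + x (As ∩ Bs) - x As - x Bs := hrow_eval (As, Bs) x
        rw [h2] at h1
        have h3 : b (Sum.inl (As, Bs)) = 0 := rfl
        rw [h3] at h1
        linarith
      · have h2 := hx (Sum.inr (Sum.inl i))
        have h3 := hx (Sum.inr (Sum.inr i))
        have e2 : ∑ S : Finset (Fin m), ((A (Sum.inr (Sum.inl i)) S : ℚ) : ℝ) * x S
            = x (T i) := heval (T i) x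
        have e3 : ∑ S : Finset (Fin m), ((A (Sum.inr (Sum.inr i)) S : ℚ) : ℝ) * x S
            = -(x (T i)) := by
          have h4 : ∀ S : Finset (Fin m), ((A (Sum.inr (Sum.inr i)) S : ℚ) : ℝ) * x S
              = -((((if T i = S then 1 else 0 : ℚ)) : ℝ) * x S) := by
            intro S
            have : A (Sum.inr (Sum.inr i)) S = (if T i = S then -1 else 0 : ℚ) := rfl
            rw [this]; split <;> simp
          rw [Finset.sum_congr rfl fun S _ => h4 S, Finset.sum_neg_distrib, heval]
        rw [e2] at h2
        rw [e3] at h3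
        have hb2 : b (Sum.inr (Sum.inl i)) = f i := rfl
        have hb3 : b (Sum.inr (Sum.inr i)) = -f i := rfl
        rw [hb2] at h2
        rw [hb3] at h3
        linarith [le_antisymm h2 (by linarith : f i ≤ x (T i))]
    · exfalso
      apply hnc
      set u : (Finset (Fin m) × Finset (Fin m)) → ℚ := fun p => y (Sum.inl p) with hu
      set w : Fin n → ℚ := fun i => y (Sum.inr (Sum.inl i)) - y (Sum.inr (Sum.inr i)) with hw
      have hbal : ∀ S : Finset (Fin m),
          ∑ p, u p * rowQ p S + ∑ i, w i * (if T i = S then (1:ℚ) else 0) = 0 := by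
        intro S
        have h0 := hyA S
        rw [Fintype.sum_sum_type, Fintype.sum_sum_type] at h0
        have h1 : ∑ p, u p * rowQ p S
            + (∑ i, y (Sum.inr (Sum.inl i)) * (if T i = S then (1:ℚ) else 0)
              + ∑ i, y (Sum.inr (Sum.inr i)) * (if T i = S then (-1:ℚ) else 0)) = 0 := h0
        have h2 : ∑ i, w i * (if T i = S then (1:ℚ) else 0)
            = ∑ i, y (Sum.inr (Sum.inl i)) * (if T i = S then (1:ℚ) else 0)
              + ∑ i, y (Sum.inr (Sum.inr i)) * (if T i = S then (-1:ℚ) else 0) := by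
          rw [← Finset.sum_add_distrib]
          refine Finset.sum_congr rfl fun i _ => ?_
          simp only [hw]; split <;> ring
        rw [h2]
        exact h1
      have hwf : ∑ i, (w i : ℝ) * f i < 0 := by
        have h0 := hyb
        rw [Fintype.sum_sum_type, Fintype.sum_sum_type] at h0
        have h1 : ∑ p, (y (Sum.inl p) : ℝ) * (0:ℝ)
            + (∑ i, (y (Sum.inr (Sum.inl i)) : ℝ) * f i
              + ∑ i, (y (Sum.inr (Sum.inr i)) : ℝ) * (-f i)) < 0 := h0
        have h2 : ∑ i, (w i : ℝ) * f i
            = ∑ i, (y (Sum.inr (Sum.inl i)) : ℝ) * f i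
              + ∑ i, (y (Sum.inr (Sum.inr i)) : ℝ) * (-f i) := by
          rw [← Finset.sum_add_distrib]
          refine Finset.sum_congr rfl fun i _ => ?_
          simp only [hw]; push_cast; ring
        rw [h2]
        have h3 : ∑ p, (y (Sum.inl p) : ℝ) * (0:ℝ) = 0 := by simp
        linarith
      set d : ℕ := ∏ p, (u p).den with hd
      have hdpos : 0 < d := Finset.prod_pos fun p _ => (u p).pos
      set N : (Finset (Fin m) × Finset (Fin m)) → ℕ :=
        fun p => (u p).num.toNat * (d / (u p).den) with hN
      have hNval : ∀ p, (N p : ℚ) = (d : ℚ) * u p := by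
        intro p
        have hdvd : (u p).den ∣ d := Finset.dvd_prod_of_mem _ (Finset.mem_univ p)
        obtain ⟨k, hk⟩ := hdvd
        have hnum : ((u p).num.toNat : ℤ) = (u p).num :=
          Int.toNat_of_nonneg (Rat.num_nonneg.mpr (hy0 _))
        have hdiv : d / (u p).den = k := by
          rw [hk]; exact Nat.mul_div_cancel_left k (u p).pos
        have hden : (((u p).den : ℚ)) ≠ 0 := by
          exact_mod_cast (u p).pos.ne'
        have : (N p : ℚ) = (((u p).num : ℚ)) * k := by
          simp only [hN, hdiv]
          push_cast
          rw [show (((u p).num.toNat : ℚ)) = (((u p).num : ℚ)) from by exact_mod_cast hnum]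
        have hq : (((u p).num : ℚ)) = u p * ((u p).den : ℚ) := by
          have h10 : (((u p).num : ℚ)) / ((u p).den : ℚ) * ((u p).den : ℚ)
              = u p * ((u p).den : ℚ) := by rw [Rat.num_div_den (u p)]
          rw [← h10, div_mul_cancel₀ _ hden]
        rw [this, hk, hq]
        push_cast
        ring
      set C : Multiset (Finset (Fin m) × Finset (Fin m)) :=
        ∑ p, Multiset.replicate (N p) p with hC
      have hcount : ∀ φ : (Finset (Fin m) × Finset (Fin m)) → ℕ,
          (C.map φ).sum = ∑ p, N p * φ p := by
        intro φ
        rw [hC, map_multiset_sum_nat]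
        refine Finset.sum_congr rfl fun p _ => ?_
        rw [Multiset.map_replicate, Multiset.sum_replicate, smul_eq_mul]
      have hkey : ∀ S : Finset (Fin m), (tbCount C S : ℚ) - (midCount C S : ℚ)
          = -(d : ℚ) * ∑ i, w i * (if T i = S then (1:ℚ) else 0) := by
        intro S
        have hm : (midCount C S : ℚ)
            = ∑ p, (N p : ℚ) * ((if p.1 = S then (1:ℚ) else 0)
                + (if p.2 = S then 1 else 0)) := by
          unfold midCount
          rw [hcount]
          push_cast [apply_ite (Nat.cast : ℕ → ℚ)]
          rfl
        have ht : (tbCount C S : ℚ)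
            = ∑ p, (N p : ℚ) * ((if p.1 ∪ p.2 = S then (1:ℚ) else 0)
                + (if p.1 ∩ p.2 = S then 1 else 0)) := by
          unfold tbCount
          rw [hcount]
          push_cast [apply_ite (Nat.cast : ℕ → ℚ)]
          rfl
        rw [ht, hm, ← Finset.sum_sub_distrib]
        have hpt : ∀ p, (N p : ℚ) * ((if p.1 ∪ p.2 = S then (1:ℚ) else 0)
                + (if p.1 ∩ p.2 = S then 1 else 0))
              - (N p : ℚ) * ((if p.1 = S then (1:ℚ) else 0)
                + (if p.2 = S then 1 else 0))
            = (d : ℚ) * (u p * rowQ p S) := by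
          intro p
          rw [hNval p]
          simp only [hrowQ]
          ring
        rw [Finset.sum_congr rfl fun p _ => hpt p, ← Finset.mul_sum]
        have hb5 := hbal S
        have h6 : ∑ p, u p * rowQ p S = - ∑ i, w i * (if T i = S then (1:ℚ) else 0) := by
          linarith
        rw [h6]
        ring
      refine ⟨C, ?_, ?_⟩
      · intro S hne
        by_contra hni
        push_neg at hni
        have hz : ∑ i, w i * (if T i = S then (1:ℚ) else 0) = 0 :=
          Finset.sum_eq_zero fun i _ => by rw [if_neg (hni i), mul_zero]
        have h5 := hkey S
        rw [hz, mul_zero] at h5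
        have h7 : (tbCount C S : ℚ) = (midCount C S : ℚ) := by linarith
        exact hne (by exact_mod_cast h7.symm)
      · have hti : ∀ j, (tbCount C (T j) : ℚ) - midCount C (T j) = -(d : ℚ) * w j := by
          intro j
          rw [hkey (T j)]
          congr 1
          have hpt : ∀ i, w i * (if T i = T j then (1:ℚ) else 0)
              = if i = j then w i else 0 := by
            intro i
            by_cases h : i = j
            · subst h; simp
            · rw [if_neg h, if_neg fun hh => h (hT hh), mul_zero]
          rw [Finset.sum_congr rfl fun i _ => hpt i]
          simp [Finset.sum_ite_eq']
        have hreal : ∀ j, (tbCount C (T j) : ℝ) - (midCount C (T j) : ℝ)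
            = -(d : ℝ) * (w j : ℝ) := by
          intro j
          exact_mod_cast congrArg (fun q : ℚ => (q : ℝ)) (hti j)
        rw [Finset.sum_congr rfl fun i (_ : i ∈ Finset.univ) => by rw [hreal i]]
        have h8 : ∑ i, f i * (-(d : ℝ) * (w i : ℝ))
            = (d : ℝ) * (-(∑ i, (w i : ℝ) * f i)) := by
          rw [← Finset.sum_neg_distrib, Finset.mul_sum]
          refine Finset.sum_congr rfl fun i _ => by ring
        rw [h8]
        exact mul_pos (by exact_mod_cast hdpos) (by linarith)
end

section
/- In a boolean circuit with AND and OR gates of fan-in 2 (possibly containing cycles), if for a fixed assignment to the input gates a gate g is fixed to value b' and also fixed to value b'', then b' = b''. -/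
/-- A boolean circuit (possibly cyclic): each non-input gate is an AND or OR gate
with fan-in 2, its two inputs given by `in1` and `in2`. -/
structure BoolCircuit (ι : Type) where
  isInput : ι → Prop
  /-- `true` means AND gate, `false` means OR gate (meaningless on inputs). -/
  isAnd : ι → Bool
  in1 : ι → ι
  in2 : ι → ι

/-- `Fixed C x g b`: given the assignment `x` to the input gates, gate `g` is fixed
to value `b`, witnessed by a finite rooted-tree proof (the derivation tree):
leaves are input gates carrying their assigned values; an AND gate with a single
child has value 0 with its child of value 0; an OR gate with a single child has
value 1 with its child of value 1; an AND gate with two children has all values 1;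
an OR gate with two children has all values 0. -/
inductive BoolCircuit.Fixed {ι : Type} (C : BoolCircuit ι) (x : ι → Bool) :
    ι → Bool → Prop
  | input (g : ι) (h : C.isInput g) : Fixed C x g (x g)
  | and_zero_left (g : ι) (h : ¬ C.isInput g) (hop : C.isAnd g = true)
      (h1 : Fixed C x (C.in1 g) false) : Fixed C x g false
  | and_zero_right (g : ι) (h : ¬ C.isInput g) (hop : C.isAnd g = true)
      (h2 : Fixed C x (C.in2 g) false) : Fixed C x g false
  | and_one (g : ι) (h : ¬ C.isInput g) (hop : C.isAnd g = true)
      (h1 : Fixed C x (C.in1 g) true) (h2 : Fixed C x (C.in2 g) true) :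
      Fixed C x g true
  | or_one_left (g : ι) (h : ¬ C.isInput g) (hop : C.isAnd g = false)
      (h1 : Fixed C x (C.in1 g) true) : Fixed C x g true
  | or_one_right (g : ι) (h : ¬ C.isInput g) (hop : C.isAnd g = false)
      (h2 : Fixed C x (C.in2 g) true) : Fixed C x g true
  | or_zero (g : ι) (h : ¬ C.isInput g) (hop : C.isAnd g = false)
      (h1 : Fixed C x (C.in1 g) false) (h2 : Fixed C x (C.in2 g) false) :
      Fixed C x g false

/-- for a fixed input assignment, a gate cannot be fixed to two
different values. -/
theorem fixed_value_unique {ι : Type} (C : BoolCircuit ι) (x : ι → Bool)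
    (g : ι) (b' b'' : Bool)
    (h' : C.Fixed x g b') (h'' : C.Fixed x g b'') : b' = b'' := by
  induction h' generalizing b'' with
  | input g h => cases h'' with
    | input => rfl
    | _ g' h' => exact absurd h h'
  | and_zero_left g h hop h1 ih => cases h'' with
    | input _ h' => exact absurd h' h
    | and_zero_left | and_zero_right | or_zero => rfl
    | and_one _ _ _ h1' _ => exact ih _ h1'
    | or_one_left _ _ hop' | or_one_right _ _ hop' => simp [hop] at hop'
  | and_zero_right g h hop h2 ih => cases h'' with
    | input _ h' => exact absurd h' h
    | and_zero_left | and_zero_right | or_zero => rfl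
    | and_one _ _ _ _ h2' => exact ih _ h2'
    | or_one_left _ _ hop' | or_one_right _ _ hop' => simp [hop] at hop'
  | and_one g h hop h1 h2 ih1 ih2 => cases h'' with
    | input _ h' => exact absurd h' h
    | and_one => rfl
    | and_zero_left _ _ _ h1' => exact ih1 _ h1'
    | and_zero_right _ _ _ h2' => exact ih2 _ h2'
    | or_one_left _ _ hop' | or_one_right _ _ hop' | or_zero _ _ hop' =>
        simp [hop] at hop'
  | or_one_left g h hop h1 ih => cases h'' with
    | input _ h' => exact absurd h' h
    | or_one_left | or_one_right | and_one => rfl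
    | or_zero _ _ _ h1' _ => exact ih _ h1'
    | and_zero_left _ _ hop' | and_zero_right _ _ hop' => simp [hop] at hop'
  | or_one_right g h hop h2 ih => cases h'' with
    | input _ h' => exact absurd h' h
    | or_one_left | or_one_right | and_one => rfl
    | or_zero _ _ _ _ h2' => exact ih _ h2'
    | and_zero_left _ _ hop' | and_zero_right _ _ hop' => simp [hop] at hop'
  | or_zero g h hop h1 h2 ih1 ih2 => cases h'' with
    | input _ h' => exact absurd h' h
    | or_zero => rfl
    | or_one_left _ _ _ h1' => exact ih1 _ h1'
    | or_one_right _ _ _ h2' => exact ih2 _ h2'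
    | and_zero_left _ _ hop' | and_zero_right _ _ hop' | and_one _ _ hop' =>
        simp [hop] at hop'
end

section
/- Let H = {(T_1,f_1),...,(T_n,f_n)} with T_i ∈ ℝ^m. Define ĝ(x) as the infimum of Σ_i λ_i f_i over λ ≥ 0 with Σ_i λ_i = 1 and Σ_i λ_i T_i = x. Then H is extendible to a convex function on ℝ^m if and only if ĝ(T_i) = f_i for all i ∈ [n]. -/
open Set Filter Topology Pointwise


lemma lp_attain (N : ℕ) :
    ∀ (E : Type) [NormedAddCommGroup E] [NormedSpace ℝ E] [FiniteDimensional ℝ E]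
      (K : ℕ) (c : Fin K → (E →L[ℝ] ℝ) × ℝ) (s : Finset (Fin K)) (φ : E →L[ℝ] ℝ),
      Module.finrank ℝ E * (K + 1) + s.card ≤ N →
      {x : E | ∀ j ∈ s, (c j).1 x ≤ (c j).2}.Nonempty →
      BddAbove (φ '' {x : E | ∀ j ∈ s, (c j).1 x ≤ (c j).2}) →
      ∃ x, (∀ j ∈ s, (c j).1 x ≤ (c j).2) ∧
        ∀ y, (∀ j ∈ s, (c j).1 y ≤ (c j).2) → φ y ≤ φ x := by
  induction N using Nat.strong_induction_on with
  | _ N IH =>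
  intro E _ _ _ K c s φ hN hne hbdd
  classical
  by_cases hatt : ∃ x, (∀ j ∈ s, (c j).1 x ≤ (c j).2) ∧
      ∀ y, (∀ j ∈ s, (c j).1 y ≤ (c j).2) → φ y ≤ φ x
  · exact hatt
  push_neg at hatt
  set P : Set E := {x : E | ∀ j ∈ s, (c j).1 x ≤ (c j).2} with hPdef
  have hPclosed : IsClosed P := by
    have : P = ⋂ j ∈ s, {x : E | (c j).1 x ≤ (c j).2} := by
      ext x; simp [hPdef]
    rw [this]
    exact isClosed_biInter fun j _ => isClosed_le (c j).1.continuous continuous_const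
  set S : ℝ := sSup (φ '' P) with hSdef
  have hle : ∀ x ∈ P, φ x ≤ S := fun x hx => le_csSup hbdd ⟨x, hx, rfl⟩
  have hlt : ∀ x ∈ P, φ x < S := by
    intro x hx
    obtain ⟨y, hy, hxy⟩ := hatt x hx
    exact lt_of_lt_of_le hxy (hle y hy)
  have himgne : (φ '' P).Nonempty := hne.image φ
  -- a maximizing sequence escaping to infinity
  have hseq : ∀ k : ℕ, ∃ x, x ∈ P ∧ S - 1/(k+1) < φ x ∧ (k:ℝ) < ‖x‖ := by
    intro k
    have hsub : S - 1/(k+1:ℝ) < S := by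
      have : (0:ℝ) < 1/(k+1) := by positivity
      linarith
    by_cases hK : (P ∩ Metric.closedBall (0:E) k).Nonempty
    · have hcpt : IsCompact (P ∩ Metric.closedBall (0:E) k) :=
        (isCompact_closedBall (0:E) k).inter_left hPclosed
      obtain ⟨z, hz, hzmax⟩ := hcpt.exists_isMaxOn hK φ.continuous.continuousOn
      have hzS : φ z < S := hlt z hz.1
      have hmaxlt : max (φ z) (S - 1/(k+1)) < S := max_lt hzS hsub
      obtain ⟨_, ⟨x, hxP, rfl⟩, hx⟩ := exists_lt_of_lt_csSup himgne hmaxlt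
      refine ⟨x, hxP, lt_of_le_of_lt (le_max_right _ _) hx, ?_⟩
      by_contra hxb
      push_neg at hxb
      have : x ∈ P ∩ Metric.closedBall (0:E) k :=
        ⟨hxP, by simpa [Metric.mem_closedBall, dist_zero_right] using hxb⟩
      exact absurd (hzmax this) (not_le.mpr (lt_of_le_of_lt (le_max_left _ _) hx))
    · obtain ⟨_, ⟨x, hxP, rfl⟩, hx⟩ := exists_lt_of_lt_csSup himgne hsub
      refine ⟨x, hxP, hx, ?_⟩
      by_contra hxb
      push_neg at hxb
      exact hK ⟨x, hxP, by simpa [Metric.mem_closedBall, dist_zero_right] using hxb⟩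
  choose x hxP hxφ hxnorm using hseq
  have hnorm_pos : ∀ k, (0:ℝ) < ‖x k‖ := fun k =>
    lt_of_le_of_lt (Nat.cast_nonneg k) (hxnorm k)
  set u : ℕ → E := fun k => ‖x k‖⁻¹ • x k with hudef
  have hu : ∀ k, u k ∈ Metric.sphere (0:E) 1 := by
    intro k
    simp only [hudef, mem_sphere_iff_norm, sub_zero, norm_smul, norm_inv, norm_norm]
    rw [inv_mul_cancel₀ (ne_of_gt (hnorm_pos k))]
  obtain ⟨d, hdmem, g, hgmono, hgd⟩ := (isCompact_sphere (0:E) 1).tendsto_subseq hu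
  have hd1 : ‖d‖ = 1 := by simpa [mem_sphere_iff_norm] using hdmem
  have hnorm_top : Tendsto (fun k => ‖x (g k)‖) atTop atTop := by
    apply tendsto_atTop_mono (fun k => ?_) tendsto_natCast_atTop_atTop
    exact le_of_lt (lt_of_le_of_lt (Nat.cast_le.mpr hgmono.le_apply) (hxnorm (g k)))
  have hinv0 : Tendsto (fun k => ‖x (g k)‖⁻¹) atTop (𝓝 0) :=
    hnorm_top.inv_tendsto_atTop
  have hlim : ∀ ψ : E →L[ℝ] ℝ, Tendsto (fun k => ψ (u (g k))) atTop (𝓝 (ψ d)) :=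
    fun ψ => (ψ.continuous.tendsto d).comp hgd
  have hcd : ∀ j ∈ s, (c j).1 d ≤ 0 := by
    intro j hj
    have h1 : ∀ k, (c j).1 (u (g k)) ≤ (c j).2 * ‖x (g k)‖⁻¹ := by
      intro k
      have := hxP (g k) j hj
      calc (c j).1 (u (g k)) = ‖x (g k)‖⁻¹ * (c j).1 (x (g k)) := by
            simp [hudef, map_smul]
        _ ≤ ‖x (g k)‖⁻¹ * (c j).2 := by
            exact mul_le_mul_of_nonneg_left this (inv_nonneg.mpr (norm_nonneg _))
        _ = (c j).2 * ‖x (g k)‖⁻¹ := mul_comm _ _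
    have h2 : Tendsto (fun k => (c j).2 * ‖x (g k)‖⁻¹) atTop (𝓝 0) := by
      simpa using tendsto_const_nhds.mul hinv0
    exact le_of_tendsto_of_tendsto' (hlim (c j).1) h2 h1
  have hφd : φ d = 0 := by
    have hlow : ∀ k, (S - 1) * ‖x (g k)‖⁻¹ ≤ φ (u (g k)) := by
      intro k
      have h1 : S - 1 ≤ φ (x (g k)) := by
        have := hxφ (g k)
        have h2 : 1/((g k : ℝ)+1) ≤ 1 := by
          rw [div_le_one (by positivity)]
          have : (0:ℝ) ≤ (g k : ℕ) := Nat.cast_nonneg _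
          linarith
        linarith
      calc (S - 1) * ‖x (g k)‖⁻¹ ≤ φ (x (g k)) * ‖x (g k)‖⁻¹ :=
            mul_le_mul_of_nonneg_right h1 (inv_nonneg.mpr (norm_nonneg _))
        _ = φ (u (g k)) := by simp [hudef, map_smul, mul_comm]
    have hup : ∀ k, φ (u (g k)) ≤ S * ‖x (g k)‖⁻¹ := by
      intro k
      calc φ (u (g k)) = φ (x (g k)) * ‖x (g k)‖⁻¹ := by simp [hudef, map_smul, mul_comm]
        _ ≤ S * ‖x (g k)‖⁻¹ :=
            mul_le_mul_of_nonneg_right (hle _ (hxP (g k))) (inv_nonneg.mpr (norm_nonneg _))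
    have l1 : Tendsto (fun k => (S - 1) * ‖x (g k)‖⁻¹) atTop (𝓝 0) := by
      simpa using tendsto_const_nhds.mul hinv0
    have l2 : Tendsto (fun k => S * ‖x (g k)‖⁻¹) atTop (𝓝 0) := by
      simpa using tendsto_const_nhds.mul hinv0
    have : Tendsto (fun k => φ (u (g k))) atTop (𝓝 0) :=
      tendsto_of_tendsto_of_tendsto_of_le_of_le l1 l2 hlow hup
    exact tendsto_nhds_unique (hlim φ) this
  have hd0 : d ≠ 0 := by
    intro h
    rw [h, norm_zero] at hd1
    norm_num at hd1
  by_cases hall : ∀ j ∈ s, (c j).1 d = 0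
  · -- dimension reduction case
    obtain ⟨ℓ, hℓ1, hℓd⟩ := exists_dual_vector ℝ d (norm_ne_zero_iff.mpr hd0)
    have hℓd1 : ℓ d = 1 := by rw [hℓd, hd1]; norm_num
    set W : Submodule ℝ E := LinearMap.ker (ℓ : E →ₗ[ℝ] ℝ) with hWdef
    have hproj : ∀ z : E, z - ℓ z • d ∈ W := by
      intro z
      simp [hWdef, LinearMap.mem_ker, map_sub, map_smul, hℓd1, smul_eq_mul]
    have hrank : Module.finrank ℝ W + 1 = Module.finrank ℝ E := by
      have hsurj : Function.Surjective ℓ := fun r => ⟨r • d, by simp [map_smul, hℓd1, smul_eq_mul]⟩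
      have h := LinearMap.finrank_range_add_finrank_ker (ℓ : E →ₗ[ℝ] ℝ)
      have hr : LinearMap.range (ℓ : E →ₗ[ℝ] ℝ) = ⊤ :=
        LinearMap.range_eq_top.mpr (by simpa using hsurj)
      rw [hr] at h
      rw [finrank_top ℝ ℝ] at h
      simp only [Module.finrank_self] at h
      have hker : LinearMap.ker (ℓ : E →ₗ[ℝ] ℝ) = W := rfl
      rw [hker] at h
      omega
    set c' : Fin K → ((W : Type) →L[ℝ] ℝ) × ℝ := fun j => ((c j).1.comp W.subtypeL, (c j).2)
      with hc'def
    set φ' : (W : Type) →L[ℝ] ℝ := φ.comp W.subtypeL with hφ'def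
    have hfeas' : ∀ z : E, (∀ j ∈ s, (c j).1 z ≤ (c j).2) →
        (∀ j ∈ s, (c' j).1 ⟨z - ℓ z • d, hproj z⟩ ≤ (c' j).2) := by
      intro z hz j hj
      have : (c j).1 (z - ℓ z • d) = (c j).1 z := by
        rw [map_sub, map_smul, hall j hj]
        simp
      simpa [hc'def, this] using hz j hj
    have hWlt : Module.finrank ℝ W * (K + 1) + s.card < N := by
      have h1 : Module.finrank ℝ W * (K + 1) + (K + 1) = Module.finrank ℝ E * (K + 1) := by
        rw [← hrank]; ring
      calc Module.finrank ℝ W * (K + 1) + s.card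
          < Module.finrank ℝ W * (K + 1) + s.card + (K + 1) := by omega
        _ = Module.finrank ℝ E * (K + 1) + s.card := by omega
        _ ≤ N := hN
    obtain ⟨x₀, hx₀⟩ := hne
    obtain ⟨w, hwfeas, hwmax⟩ := IH _ hWlt W K c' s φ' (le_refl _)
      ⟨⟨x₀ - ℓ x₀ • d, hproj x₀⟩, hfeas' x₀ hx₀⟩
      ⟨S, by
        rintro r ⟨z, hz, rfl⟩
        have hzP : (z : E) ∈ P := fun j hj => by simpa [hc'def] using hz j hj
        exact hle _ hzP⟩
    refine ⟨(w : E), fun j hj => by simpa [hc'def] using hwfeas j hj, ?_⟩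
    intro y hy
    have hyW := hwmax ⟨y - ℓ y • d, hproj y⟩ (hfeas' y hy)
    have : φ' ⟨y - ℓ y • d, hproj y⟩ = φ y := by
      simp [hφ'def, map_sub, map_smul, hφd, smul_eq_mul]
    rw [this] at hyW
    exact hyW
  · -- drop a constraint
    push_neg at hall
    obtain ⟨j₀, hj₀s, hj₀ne⟩ := hall
    have hj₀neg : (c j₀).1 d < 0 := lt_of_le_of_ne (hcd j₀ hj₀s) hj₀ne
    set s' : Finset (Fin K) := s.filter (fun j => (c j).1 d = 0) with hs'def
    have hsub : s' ⊆ s := Finset.filter_subset _ s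
    have hsne : s.Nonempty := ⟨j₀, hj₀s⟩
    have hpush : ∀ z : E, (∀ j ∈ s', (c j).1 z ≤ (c j).2) →
        ∃ t : ℝ, (z + t • d) ∈ P ∧ φ (z + t • d) = φ z := by
      intro z hz
      set t : ℝ := s.sup' hsne fun j =>
        if (c j).1 d = 0 then 0 else ((c j).1 z - (c j).2) / (-((c j).1 d)) with htdef
      refine ⟨t, fun j hj => ?_, by rw [map_add, map_smul, smul_eq_mul, hφd, mul_zero, add_zero]⟩
      rw [map_add, map_smul, smul_eq_mul]
      by_cases hj0 : (c j).1 d = 0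
      · rw [hj0, mul_zero, add_zero]
        exact hz j (Finset.mem_filter.mpr ⟨hj, hj0⟩)
      · have hneg : (c j).1 d < 0 := lt_of_le_of_ne (hcd j hj) hj0
        have hts : ((c j).1 z - (c j).2) / (-((c j).1 d)) ≤ t := by
          have h := Finset.le_sup' (f := fun j =>
            if (c j).1 d = 0 then 0 else ((c j).1 z - (c j).2) / (-((c j).1 d))) hj
          rw [if_neg hj0] at h
          exact h
        have hpos : (0:ℝ) < -((c j).1 d) := by linarith
        have := (div_le_iff₀ hpos).mp hts
        nlinarith
    have hbdd' : BddAbove (φ '' {x : E | ∀ j ∈ s', (c j).1 x ≤ (c j).2}) := by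
      refine ⟨S, ?_⟩
      rintro r ⟨z, hz, rfl⟩
      obtain ⟨t, htP, htφ⟩ := hpush z hz
      rw [← htφ]
      exact hle _ htP
    have hne' : {x : E | ∀ j ∈ s', (c j).1 x ≤ (c j).2}.Nonempty := by
      obtain ⟨x₀, hx₀⟩ := hne
      exact ⟨x₀, fun j hj => hx₀ j (hsub hj)⟩
    have hcard : s'.card < s.card :=
      Finset.card_lt_card (Finset.filter_ssubset.mpr ⟨j₀, hj₀s, hj₀ne⟩)
    have hlt' : Module.finrank ℝ E * (K + 1) + s'.card < N := by omega
    obtain ⟨x', hx'feas, hx'max⟩ := IH _ hlt' E K c s' φ (le_refl _) hne' hbdd'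
    obtain ⟨t, htP, htφ⟩ := hpush x' hx'feas
    refine ⟨x' + t • d, htP, ?_⟩
    intro y hy
    rw [htφ]
    exact hx'max y (fun j hj => hy j (hsub hj))


section Support

variable (m n : ℕ) (T : Fin n → (Fin m → ℝ)) (f : Fin n → ℝ)

lemma exists_support [NeZero n] (i : Fin n)
    (hroof : ∀ lam : Fin n → ℝ, (∀ j, 0 ≤ lam j) → ∑ j, lam j = 1 →
      ∑ j, lam j • T j = T i → f i ≤ ∑ j, lam j * f j) :
    ∃ (y : Fin m → ℝ) (μ : ℝ), (∀ j, (∑ k, y k * T j k) + μ ≤ f j) ∧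
      (∑ k, y k * T i k) + μ = f i := by
  classical
  haveI : Nonempty (Fin n) := ⟨i⟩
  -- the continuous linear functionals (y, μ) ↦ y ⬝ T j + μ  on (Fin m → ℝ) × ℝ
  set L : Fin n → ((Fin m → ℝ) × ℝ) →L[ℝ] ℝ := fun j =>
    LinearMap.toContinuousLinearMap
      { toFun := fun p => (∑ k, p.1 k * T j k) + p.2
        map_add' := by
          intro p q
          simp only [Prod.fst_add, Prod.snd_add, Pi.add_apply, add_mul,
            Finset.sum_add_distrib]
          ring
        map_smul' := by
          intro r p
          simp only [Prod.smul_fst, Prod.smul_snd, Pi.smul_apply, smul_eq_mul,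
            RingHom.id_apply, mul_assoc, ← Finset.mul_sum, mul_add] } with hLdef
  have hLapp : ∀ j (p : (Fin m → ℝ) × ℝ), L j p = (∑ k, p.1 k * T j k) + p.2 := by
    intro j p; rfl

  -- the feasible polyhedron of affine minorants
  set P : Set ((Fin m → ℝ) × ℝ) := {a | ∀ j ∈ Finset.univ, (L j) a ≤ f j} with hPdef
  -- sub-step 1: for every ε > 0 there is a feasible point whose value at T i exceeds f i - ε
  have hsep : ∀ ε : ℝ, 0 < ε → ∃ a, a ∈ P ∧ f i - ε < L i a := by
    intro ε hε
    set Δ : Set (Fin n → ℝ) := {lam | (∀ j, 0 ≤ lam j) ∧ ∑ j, lam j = 1} with hΔdef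
    set F : (Fin n → ℝ) → (Fin m → ℝ) × ℝ :=
      fun lam => (∑ j, lam j • T j, ∑ j, lam j * f j) with hFdef
    set R : Set ((Fin m → ℝ) × ℝ) := {p | p.1 = 0 ∧ 0 ≤ p.2} with hRdef
    have hΔclosed : IsClosed Δ := by
      have : Δ = (⋂ j, {lam : Fin n → ℝ | 0 ≤ lam j}) ∩ {lam | ∑ j, lam j = 1} := by
        ext lam; simp [hΔdef, Set.mem_iInter]
      rw [this]
      exact ((isClosed_iInter fun j =>
        isClosed_le continuous_const (continuous_apply j))).inter
        (isClosed_eq (continuous_finset_sum _ fun j _ => continuous_apply j) continuous_const)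
    have hΔsub : Δ ⊆ Metric.closedBall 0 1 := by
      intro lam hlam
      rw [Metric.mem_closedBall, dist_zero_right]
      refine (pi_norm_le_iff_of_nonneg zero_le_one).mpr fun j => ?_
      rw [Real.norm_eq_abs, abs_of_nonneg (hlam.1 j)]
      calc lam j ≤ ∑ j', lam j' :=
            Finset.single_le_sum (fun j' _ => hlam.1 j') (Finset.mem_univ j)
        _ = 1 := hlam.2
    have hΔcpt : IsCompact Δ :=
      IsCompact.of_isClosed_subset (isCompact_closedBall 0 1) hΔclosed hΔsub
    have hFcont : Continuous F := by
      refine Continuous.prodMk ?_ ?_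
      · exact continuous_finset_sum _ fun j _ => (continuous_apply j).smul continuous_const
      · exact continuous_finset_sum _ fun j _ => (continuous_apply j).mul continuous_const
    have hAcpt : IsCompact (F '' Δ) := hΔcpt.image hFcont
    have hRclosed : IsClosed R := by
      have : R = {p : (Fin m → ℝ) × ℝ | p.1 = 0} ∩ {p | 0 ≤ p.2} := by ext p; simp [hRdef]
      rw [this]
      exact (isClosed_eq continuous_fst continuous_const).inter
        (isClosed_le continuous_const continuous_snd)
    have hDclosed : IsClosed (F '' Δ + R) := hRclosed.add_left_of_isCompact hAcpt
    have hAconv : Convex ℝ (F '' Δ) := by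
      rintro p ⟨lam, hlam, rfl⟩ q ⟨lam', hlam', rfl⟩ a b ha hb hab
      refine ⟨fun j => a * lam j + b * lam' j, ⟨fun j =>
        add_nonneg (mul_nonneg ha (hlam.1 j)) (mul_nonneg hb (hlam'.1 j)), ?_⟩, ?_⟩
      · rw [Finset.sum_add_distrib, ← Finset.mul_sum, ← Finset.mul_sum, hlam.2, hlam'.2]
        simpa using hab
      · simp only [hFdef, Prod.smul_mk, Prod.mk_add_mk, smul_eq_mul, Prod.mk.injEq]
        constructor
        · rw [Finset.smul_sum, Finset.smul_sum, ← Finset.sum_add_distrib]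
          exact Finset.sum_congr rfl fun x _ => by rw [add_smul, mul_smul, mul_smul]
        · rw [Finset.mul_sum, Finset.mul_sum, ← Finset.sum_add_distrib]
          exact Finset.sum_congr rfl fun x _ => by ring
    have hRconv : Convex ℝ R := by
      rintro p ⟨hp1, hp2⟩ q ⟨hq1, hq2⟩ a b ha hb hab
      constructor
      · simp [hp1, hq1]
      · simp only [Prod.snd_add, Prod.smul_snd, smul_eq_mul]
        exact add_nonneg (mul_nonneg ha hp2) (mul_nonneg hb hq2)
    have hDconv : Convex ℝ (F '' Δ + R) := hAconv.add hRconv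
    -- (T i, f i) belongs to the set
    set lam₀ : Fin n → ℝ := fun j => if j = i then 1 else 0 with hlam₀def
    have hlam₀Δ : lam₀ ∈ Δ := by
      constructor
      · intro j; simp only [hlam₀def]; split <;> norm_num
      · simp [hlam₀def]
    have hF₀ : F lam₀ = (T i, f i) := by
      simp only [hFdef, hlam₀def, ite_smul, one_smul, zero_smul, ite_mul, one_mul, zero_mul,
        Finset.sum_ite_eq', Finset.mem_univ, if_true]
    have hq : ((T i, f i) : (Fin m → ℝ) × ℝ) ∈ F '' Δ + R := by
      rw [Set.mem_add]
      refine ⟨(T i, f i), ⟨lam₀, hlam₀Δ, hF₀⟩, 0, ⟨rfl, le_refl 0⟩, add_zero _⟩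
    -- but (T i, f i - ε) does not
    have hp : ((T i, f i - ε) : (Fin m → ℝ) × ℝ) ∉ F '' Δ + R := by
      rw [Set.mem_add]
      rintro ⟨pa, ⟨lam, hlam, rfl⟩, pr, ⟨hr1, hr2⟩, heq⟩
      have h1 : ∑ j, lam j • T j = T i := by
        have := congrArg Prod.fst heq
        simpa [hFdef, hr1] using this
      have h2 : (∑ j, lam j * f j) + pr.2 = f i - ε := by
        have := congrArg Prod.snd heq
        simpa [hFdef] using this
      have h3 := hroof lam hlam.1 hlam.2 h1
      linarith
    obtain ⟨φ, u, hφp, hφD⟩ := geometric_hahn_banach_point_closed hDconv hDclosed hp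
    set s₀ : ℝ := φ (0, 1) with hs₀def
    have hq' : u < φ (T i, f i) := hφD _ hq
    have hsplit : ∀ v : Fin m → ℝ, ∀ t : ℝ, φ (v, t) = φ (v, 0) + t * s₀ := by
      intro v t
      have : ((v, t) : (Fin m → ℝ) × ℝ) = (v, 0) + t • ((0 : Fin m → ℝ), (1:ℝ)) := by
        simp [Prod.ext_iff]
      rw [this, map_add, map_smul, smul_eq_mul, hs₀def]
    have hs₀pos : 0 < s₀ := by
      have h1 : φ (T i, f i) = φ (T i, 0) + f i * s₀ := hsplit _ _
      have h2 : φ (T i, f i - ε) = φ (T i, 0) + (f i - ε) * s₀ := hsplit _ _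
      nlinarith
    -- expansion of φ on first coordinates
    have hexp : ∀ v : Fin m → ℝ, φ (v, 0) = ∑ k, v k * φ (Pi.single k 1, 0) := by
      intro v
      have hv : ((v, (0:ℝ)) : (Fin m → ℝ) × ℝ) =
          ∑ k, v k • ((Pi.single k 1 : Fin m → ℝ), (0:ℝ)) := by
        rw [Prod.ext_iff]
        constructor
        · rw [Prod.fst_sum]
          simp only [Prod.smul_fst]
          rw [show (fun k : Fin m => v k • (Pi.single k 1 : Fin m → ℝ)) =
            fun k => Pi.single k (v k) from ?_]
          · exact (Finset.univ_sum_single v).symm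
          · funext k
            rw [← Pi.single_smul]
            norm_num
        · rw [Prod.snd_sum]
          simp
      rw [hv, map_sum]
      congr 1
      funext k
      rw [map_smul, smul_eq_mul]
    -- every (T j, f j) is in the set
    have hmemj : ∀ j, ((T j, f j) : (Fin m → ℝ) × ℝ) ∈ F '' Δ + R := by
      intro j
      set lamj : Fin n → ℝ := fun j' => if j' = j then 1 else 0 with hlamjdef
      have hlamjΔ : lamj ∈ Δ := by
        constructor
        · intro j'; simp only [hlamjdef]; split <;> norm_num
        · simp [hlamjdef]
      have hFj : F lamj = (T j, f j) := by
        simp only [hFdef, hlamjdef, ite_smul, one_smul, zero_smul, ite_mul, one_mul, zero_mul,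
          Finset.sum_ite_eq', Finset.mem_univ, if_true]
      rw [Set.mem_add]
      exact ⟨(T j, f j), ⟨lamj, hlamjΔ, hFj⟩, 0, ⟨rfl, le_refl 0⟩, add_zero _⟩
    have hφj : ∀ j, u < φ (T j, 0) + f j * s₀ := by
      intro j
      have := hφD _ (hmemj j)
      rwa [hsplit (T j) (f j)] at this
    -- the separating affine functional, normalized
    have hLval : ∀ j : Fin n,
        L j (fun k => -(φ (Pi.single k 1, 0)) / s₀, u / s₀) = (u - φ (T j, 0)) / s₀ := by
      intro j
      rw [hLapp]
      have h1 : ∀ k, (-(φ ((Pi.single k 1 : Fin m → ℝ), (0:ℝ))) / s₀) * T j k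
          = -(T j k * φ ((Pi.single k 1 : Fin m → ℝ), (0:ℝ)) / s₀) := fun k => by ring
      simp_rw [h1]
      rw [Finset.sum_neg_distrib, ← Finset.sum_div, ← hexp (T j)]
      ring
    refine ⟨(fun k => -(φ (Pi.single k 1, 0)) / s₀, u / s₀), ?_, ?_⟩
    · intro j _
      rw [hLval j]
      have := hφj j
      have h2 : (u - φ (T j, 0)) / s₀ < f j := by
        rw [div_lt_iff₀ hs₀pos]
        linarith
      exact le_of_lt h2
    · rw [hLval i]
      rw [lt_div_iff₀ hs₀pos]
      have := hφp
      rw [hsplit (T i) (f i - ε)] at this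
      linarith
  -- sub-step 2: linear programming attainment
  obtain ⟨a, haP, hamax⟩ := lp_attain
    (Module.finrank ℝ ((Fin m → ℝ) × ℝ) * (n + 1) + (Finset.univ : Finset (Fin n)).card)
    ((Fin m → ℝ) × ℝ) n (fun j => (L j, f j)) Finset.univ (L i)
    (by simp)
    ⟨((0 : Fin m → ℝ), Finset.univ.inf' Finset.univ_nonempty f), by
      intro j _
      rw [hLapp]
      simp only [Pi.zero_apply, zero_mul, Finset.sum_const_zero, zero_add]
      exact Finset.inf'_le f (Finset.mem_univ j)⟩
    ⟨f i, by
      rintro r ⟨a, ha, rfl⟩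
      exact ha i (Finset.mem_univ i)⟩
  have haLi : L i a = f i := by
    refine le_antisymm (haP i (Finset.mem_univ i)) ?_
    by_contra hlt
    push_neg at hlt
    obtain ⟨b, hbP, hb⟩ := hsep (f i - L i a) (by linarith)
    have := hamax b hbP
    have h2 : f i - (f i - L i a) = L i a := by ring
    rw [h2] at hb
    linarith
  refine ⟨a.1, a.2, fun j => ?_, ?_⟩
  · have := haP j (Finset.mem_univ j)
    rwa [hLapp] at this
  · rw [← hLapp]
    exact haLi

end Support

/-- assuming the convex hull of the defined points has nonempty
interior, the partial function is extendible to a convex function on `ℝ^m` iff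
the convex roof `ĝ` equals the prescribed values at the defined points. -/
theorem convex_extension_iff_roof (m n : ℕ) (T : Fin n → (Fin m → ℝ))
    (f : Fin n → ℝ)
    (hint : (interior (convexHull ℝ (Set.range T))).Nonempty) :
    (∃ g : (Fin m → ℝ) → ℝ, ConvexOn ℝ Set.univ g ∧ ∀ i, g (T i) = f i) ↔
      (∀ i : Fin n,
        sInf {y : ℝ | ∃ lam : Fin n → ℝ,
          (∀ j, 0 ≤ lam j) ∧ (∑ j, lam j = 1) ∧ (∑ j, lam j • T j = T i) ∧
          y = ∑ j, lam j * f j} = f i) := by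
  classical
  have hfn : Nonempty (Fin n) := by
    rcases isEmpty_or_nonempty (Fin n) with h | h
    · obtain ⟨x, hx⟩ := hint
      have hx' := interior_subset hx
      rw [Set.range_eq_empty T, convexHull_empty] at hx'
      exact absurd hx' (Set.notMem_empty x)
    · exact h
  haveI : NeZero n := ⟨by rintro rfl; exact Fin.elim0 hfn.some⟩
  -- the lower bound of every roof-set
  have hlb : ∀ i : Fin n, ∀ y ∈ {y : ℝ | ∃ lam : Fin n → ℝ,
      (∀ j, 0 ≤ lam j) ∧ (∑ j, lam j = 1) ∧ (∑ j, lam j • T j = T i) ∧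
      y = ∑ j, lam j * f j}, Finset.univ.inf' Finset.univ_nonempty f ≤ y := by
    rintro i y ⟨lam, h0, h1, _, rfl⟩
    calc Finset.univ.inf' Finset.univ_nonempty f
        = ∑ j, lam j * Finset.univ.inf' Finset.univ_nonempty f := by
          rw [← Finset.sum_mul, h1, one_mul]
      _ ≤ ∑ j, lam j * f j :=
          Finset.sum_le_sum fun j _ =>
            mul_le_mul_of_nonneg_left (Finset.inf'_le f (Finset.mem_univ j)) (h0 j)
  have hmemi : ∀ i : Fin n, f i ∈ {y : ℝ | ∃ lam : Fin n → ℝ,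
      (∀ j, 0 ≤ lam j) ∧ (∑ j, lam j = 1) ∧ (∑ j, lam j • T j = T i) ∧
      y = ∑ j, lam j * f j} := by
    intro i
    refine ⟨fun j => if j = i then 1 else 0, fun j => by by_cases h : j = i <;> simp [h], by simp, ?_, ?_⟩
    · simp [ite_smul]
    · simp [ite_mul]
  constructor
  · -- a convex extension forces the roof to be exact
    rintro ⟨g, hg, hgT⟩ i
    refine le_antisymm (csInf_le ⟨_, hlb i⟩ (hmemi i)) (le_csInf ⟨f i, hmemi i⟩ ?_)
    rintro y ⟨lam, h0, h1, hT, rfl⟩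
    calc f i = g (T i) := (hgT i).symm
      _ = g (∑ j, lam j • T j) := by rw [hT]
      _ ≤ ∑ j, lam j * g (T j) :=
          hg.map_sum_le (fun j _ => h0 j) h1 (fun j _ => Set.mem_univ _)
      _ = ∑ j, lam j * f j := by
          exact Finset.sum_congr rfl fun j _ => by rw [hgT j]
  · -- conversely, build the extension as a max of supporting affine functions
    intro hroof
    have hroof' : ∀ i : Fin n, ∀ lam : Fin n → ℝ, (∀ j, 0 ≤ lam j) → ∑ j, lam j = 1 →
        ∑ j, lam j • T j = T i → f i ≤ ∑ j, lam j * f j := by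
      intro i lam h0 h1 hT
      have hmem : (∑ j, lam j * f j) ∈ {y : ℝ | ∃ lam : Fin n → ℝ,
          (∀ j, 0 ≤ lam j) ∧ (∑ j, lam j = 1) ∧ (∑ j, lam j • T j = T i) ∧
          y = ∑ j, lam j * f j} := ⟨lam, h0, h1, hT, rfl⟩
      have := csInf_le ⟨_, hlb i⟩ hmem
      rw [hroof i] at this
      exact this
    choose y μ hyle hyeq using fun i => exists_support m n T f i (hroof' i)
    refine ⟨fun x => Finset.univ.sup' Finset.univ_nonempty
      (fun i => (∑ k, y i k * x k) + μ i), ⟨convex_univ, ?_⟩, ?_⟩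
    · intro p _ q _ a b ha hb hab
      refine Finset.sup'_le _ _ fun i _ => ?_
      have hexp : (∑ k, y i k * (a • p + b • q) k) + μ i
          = a * ((∑ k, y i k * p k) + μ i) + b * ((∑ k, y i k * q k) + μ i) := by
        simp only [Pi.add_apply, Pi.smul_apply, smul_eq_mul]
        rw [mul_add, mul_add, Finset.mul_sum, Finset.mul_sum, add_add_add_comm,
          ← Finset.sum_add_distrib]
        have : a * μ i + b * μ i = μ i := by rw [← add_mul, hab, one_mul]
        rw [this]
        congr 1
        exact Finset.sum_congr rfl fun k _ => by ring
      rw [hexp]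
      have h1 : (∑ k, y i k * p k) + μ i ≤ Finset.univ.sup' Finset.univ_nonempty
          (fun i => (∑ k, y i k * p k) + μ i) :=
        Finset.le_sup' (f := fun i => (∑ k, y i k * p k) + μ i) (Finset.mem_univ i)
      have h2 : (∑ k, y i k * q k) + μ i ≤ Finset.univ.sup' Finset.univ_nonempty
          (fun i => (∑ k, y i k * q k) + μ i) :=
        Finset.le_sup' (f := fun i => (∑ k, y i k * q k) + μ i) (Finset.mem_univ i)
      exact add_le_add (mul_le_mul_of_nonneg_left h1 ha) (mul_le_mul_of_nonneg_left h2 hb)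
    · intro i
      refine le_antisymm (Finset.sup'_le _ _ fun j _ => hyle j i) ?_
      calc f i = (∑ k, y i k * T i k) + μ i := (hyeq i).symm
        _ ≤ _ := Finset.le_sup' (f := fun j => (∑ k, y j k * T i k) + μ j) (Finset.mem_univ i)
end

section
/- Let A be an integer n×m matrix and b an integer n-vector, and let U be the largest absolute value among the entries of A and b. Then every extreme point y of the polyhedron P = {y ∈ ℝ^m : Ay ≤ b} satisfies |y_j| ≤ (mU)^m for all j, and moreover if y_j ≠ 0 then |y_j| ≥ 1/(mU)^m. -/
open Matrix Submodule

/-- Step 1: tight rows of an extreme point span everything. -/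
theorem span_tight_rows (n m : ℕ) (A : Matrix (Fin n) (Fin m) ℤ)
    (b : Fin n → ℤ) (y : Fin m → ℝ)
    (hy : y ∈ Set.extremePoints ℝ
      {z : Fin m → ℝ | ∀ i, (∑ j, (A i j : ℝ) * z j) ≤ (b i : ℝ)}) :
    span ℝ ((fun i j => (A i j : ℝ)) '' {i | (∑ j, (A i j : ℝ) * y j) = (b i : ℝ)}) = ⊤ := by
  obtain ⟨hyP, hext⟩ := hy
  set r : Fin n → (Fin m → ℝ) := fun i j => (A i j : ℝ) with hr
  set T : Set (Fin n) := {i | (∑ j, r i j * y j) = (b i : ℝ)} with hT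
  by_contra hne
  obtain ⟨f, hf0, hfbot⟩ := Submodule.exists_dual_map_eq_bot_of_lt_top
    (lt_top_iff_ne_top.2 hne) inferInstance
  set d : Fin m → ℝ := fun j => f (fun j' => if j = j' then (1:ℝ) else 0) with hd
  have hfx : ∀ x : Fin m → ℝ, f x = ∑ j, x j * d j := by
    intro x
    conv_lhs => rw [pi_eq_sum_univ x]
    rw [map_sum]
    refine Finset.sum_congr rfl fun j _ => ?_
    rw [LinearMap.map_smul, smul_eq_mul]
  have hd0 : d ≠ 0 := by
    intro h
    apply hf0
    refine LinearMap.ext fun x => ?_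
    rw [hfx, h]
    simp
  have hdots : ∀ i ∈ T, ∑ j, r i j * d j = 0 := by
    intro i hi
    rw [← hfx]
    have : f (r i) ∈ Submodule.map f (span ℝ (r '' T)) :=
      Submodule.mem_map_of_mem (subset_span ⟨i, hi, rfl⟩)
    rw [hfbot] at this
    simpa using this
  classical
  set F : Finset (Fin n) := Finset.univ.filter (fun i => i ∉ T) with hF
  have hslack : ∀ i ∈ F, 0 < (b i : ℝ) - ∑ j, r i j * y j := by
    intro i hi
    simp only [hF, Finset.mem_filter] at hi
    have h1 := hyP i
    have h2 : (∑ j, r i j * y j) ≠ (b i : ℝ) := hi.2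
    have : (∑ j, r i j * y j) < (b i : ℝ) := lt_of_le_of_ne h1 h2
    linarith
  set ε : ℝ := if h : F.Nonempty then
      F.inf' h (fun i => ((b i : ℝ) - ∑ j, r i j * y j) / (|∑ j, r i j * d j| + 1))
    else 1 with hε
  have hεpos : 0 < ε := by
    rw [hε]
    split
    · next h =>
      apply (Finset.lt_inf'_iff h).2
      intro i hi
      exact div_pos (hslack i hi) (by positivity)
    · norm_num
  have hεle : ∀ i ∉ T, ε * (|∑ j, r i j * d j| + 1) ≤ (b i : ℝ) - ∑ j, r i j * y j := by
    intro i hi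
    have hiF : i ∈ F := by simp [hF, hi]
    have hFne : F.Nonempty := ⟨i, hiF⟩
    have : ε ≤ ((b i : ℝ) - ∑ j, r i j * y j) / (|∑ j, r i j * d j| + 1) := by
      rw [hε, dif_pos hFne]
      exact Finset.inf'_le _ hiF
    calc ε * (|∑ j, r i j * d j| + 1)
        ≤ (((b i : ℝ) - ∑ j, r i j * y j) / (|∑ j, r i j * d j| + 1)) *
            (|∑ j, r i j * d j| + 1) := by
          apply mul_le_mul_of_nonneg_right this (by positivity)
      _ = (b i : ℝ) - ∑ j, r i j * y j := by field_simp
  have hmem : ∀ s : ℝ, |s| ≤ ε → (fun j => y j + s * d j) ∈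
      {z : Fin m → ℝ | ∀ i, (∑ j, (A i j : ℝ) * z j) ≤ (b i : ℝ)} := by
    intro s hs i
    have hexp : (∑ j, r i j * (y j + s * d j)) =
        (∑ j, r i j * y j) + s * (∑ j, r i j * d j) := by
      rw [Finset.mul_sum]
      rw [← Finset.sum_add_distrib]
      refine Finset.sum_congr rfl fun j _ => ?_
      ring
    show (∑ j, r i j * (y j + s * d j)) ≤ (b i : ℝ)
    rw [hexp]
    by_cases hi : i ∈ T
    · rw [hdots i hi, mul_zero, add_zero, hi]
    · have h1 : s * (∑ j, r i j * d j) ≤ ε * |∑ j, r i j * d j| := by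
        calc s * (∑ j, r i j * d j) ≤ |s * (∑ j, r i j * d j)| := le_abs_self _
          _ = |s| * |∑ j, r i j * d j| := abs_mul _ _
          _ ≤ ε * |∑ j, r i j * d j| := mul_le_mul_of_nonneg_right hs (abs_nonneg _)
      have h2 := hεle i hi
      nlinarith [hεpos]
  have h1 : (fun j => y j + ε * d j) ∈ _ := hmem ε (by rw [abs_of_pos hεpos])
  have h2 : (fun j => y j + (-ε) * d j) ∈ _ := hmem (-ε) (by rw [abs_neg, abs_of_pos hεpos])
  have hseg : y ∈ openSegment ℝ (fun j => y j + ε * d j) (fun j => y j + (-ε) * d j) := by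
    refine ⟨1/2, 1/2, by norm_num, by norm_num, by norm_num, ?_⟩
    ext j
    simp only [Pi.add_apply, Pi.smul_apply, smul_eq_mul]
    ring
  have hx1 := hext h1 h2 hseg
  apply hd0
  funext j
  have hj := congrFun hx1 j
  replace hj : y j + ε * d j = y j := hj
  have hzd : ε * d j = 0 := by linarith
  rcases mul_eq_zero.1 hzd with h | h
  · exact absurd h (ne_of_gt hεpos)
  · exact h


/-- extreme points of an integer polyhedron `{y : Ay ≤ b}` have
coordinates bounded by `(mU)^m` in absolute value, and nonzero coordinates bounded
below by `1/(mU)^m`, where `U` bounds the absolute values of the entries of `A`, `b`. -/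
theorem extreme_point_coordinate_bounds (n m : ℕ) (A : Matrix (Fin n) (Fin m) ℤ)
    (b : Fin n → ℤ) (U : ℕ)
    (hA : ∀ i j, |A i j| ≤ (U : ℤ)) (hb : ∀ i, |b i| ≤ (U : ℤ))
    (y : Fin m → ℝ)
    (hy : y ∈ Set.extremePoints ℝ
      {z : Fin m → ℝ | ∀ i, (∑ j, (A i j : ℝ) * z j) ≤ (b i : ℝ)}) :
    ∀ j : Fin m, |y j| ≤ ((m * U : ℝ)) ^ m ∧
      (y j ≠ 0 → 1 / ((m * U : ℝ)) ^ m ≤ |y j|) := by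
  classical
  have hspan := span_tight_rows n m A b y hy
  set r : Fin n → (Fin m → ℝ) := fun i j => (A i j : ℝ) with hr
  set T : Set (Fin n) := {i | (∑ j, r i j * y j) = (b i : ℝ)} with hT
  -- extract a basis from the tight rows
  obtain ⟨t, htS, hsp, hli⟩ := exists_linearIndependent ℝ (r '' T)
  rw [hspan] at hsp
  have htfin : t.Finite := hli.setFinite
  letI := htfin.fintype
  have hcard : Fintype.card t = m := by
    have hB : Nonempty (Module.Basis t ℝ (Fin m → ℝ)) := ⟨Module.Basis.mk hli (by rw [Subtype.range_coe]; exact hsp.ge)⟩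
    have := Module.finrank_eq_card_basis hB.some
    rw [Module.finrank_fin_fun] at this
    omega
  have e : Fin m ≃ t := (Fintype.equivFinOfCardEq hcard).symm
  have hg : ∀ k : Fin m, ∃ i, i ∈ T ∧ r i = (e k : Fin m → ℝ) := by
    intro k
    obtain ⟨i, hi, hri⟩ := htS (e k).2
    exact ⟨i, hi, hri⟩
  choose g hgT hgr using hg
  set M : Matrix (Fin m) (Fin m) ℤ := fun k l => A (g k) l with hM
  set Mr : Matrix (Fin m) (Fin m) ℝ := M.map (Int.cast) with hMr
  have hMrrows : ∀ k, Mr k = r (g k) := fun k => rfl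
  -- Mr is invertible
  have hliMr : LinearIndependent ℝ (fun k => Mr k) := by
    have : LinearIndependent ℝ (fun k : Fin m => ((e k : Fin m → ℝ))) :=
      hli.comp e (Equiv.injective e)
    convert this using 1
    funext k
    rw [hMrrows, hgr]
  have hdet : Mr.det ≠ 0 := by
    have := Matrix.linearIndependent_rows_iff_isUnit.1 hliMr
    rw [Matrix.isUnit_iff_isUnit_det] at this
    exact this.ne_zero
  -- y solves the square system
  set c : Fin m → ℤ := fun k => b (g k) with hc
  have hMy : Mr *ᵥ y = fun k => ((c k : ℤ) : ℝ) := by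
    funext k
    show ∑ l, Mr k l * y l = ((b (g k) : ℤ) : ℝ)
    have := hgT k
    rw [hT] at this
    exact this
  -- Cramer's rule
  have hcramer : ∀ j, (M.det : ℝ) * y j = ((M.updateCol j c).det : ℝ) := by
    intro j
    have h1 : Mr.adjugate *ᵥ (Mr *ᵥ y) = Mr.det • y := by
      rw [Matrix.mulVec_mulVec, Matrix.adjugate_mul, Matrix.smul_mulVec,
        Matrix.one_mulVec]
    have key : Mr.det • y = Matrix.cramer Mr (fun k => ((c k : ℤ) : ℝ)) := by
      rw [← hMy, ← h1, Matrix.cramer_eq_adjugate_mulVec]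
    have hj := congrFun key j
    simp only [Pi.smul_apply, smul_eq_mul] at hj
    rw [Matrix.cramer_apply] at hj
    have castdet : ∀ (X : Matrix (Fin m) (Fin m) ℤ),
        ((X.det : ℤ) : ℝ) = (X.map (Int.cast : ℤ → ℝ)).det := by
      intro X
      rw [show (Int.cast : ℤ → ℝ) = ⇑(Int.castRingHom ℝ) from rfl,
        ← RingHom.mapMatrix_apply, ← RingHom.map_det]
    have hdetmap : (M.det : ℝ) = Mr.det := by rw [hMr, castdet M]
    have hupd : ((M.updateCol j c).det : ℝ) =
        (Mr.updateCol j (fun k => ((c k : ℤ) : ℝ))).det := by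
      rw [castdet, Matrix.map_updateCol, hMr]
      rfl
    rw [hdetmap, hupd]
    exact hj
  -- determinant bounds
  have habs : ∀ (X : Matrix (Fin m) (Fin m) ℤ), (∀ k l, |X k l| ≤ (U : ℤ)) →
      |X.det| ≤ (m ^ m * U ^ m : ℕ) := by
    intro X hX
    have h1 : (AbsoluteValue.abs : AbsoluteValue ℤ ℤ) X.det ≤
        Nat.factorial (Fintype.card (Fin m)) • ((U : ℤ)) ^ (Fintype.card (Fin m)) :=
      Matrix.det_le (fun i j => hX i j)
    simp only [Fintype.card_fin, nsmul_eq_mul] at h1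
    calc |X.det| ≤ (Nat.factorial m : ℤ) * (U : ℤ) ^ m := h1
      _ ≤ (m ^ m : ℤ) * (U : ℤ) ^ m := by
          apply mul_le_mul_of_nonneg_right _ (by positivity)
          exact_mod_cast Nat.factorial_le_pow m
      _ = ((m ^ m * U ^ m : ℕ) : ℤ) := by push_cast; ring
  have hDle : |M.det| ≤ (m ^ m * U ^ m : ℕ) := habs M (fun k l => hA (g k) l)
  have hD0 : M.det ≠ 0 := by
    intro h
    apply hdet
    have castdet : ((M.det : ℤ) : ℝ) = Mr.det := by
      rw [hMr, show (Int.cast : ℤ → ℝ) = ⇑(Int.castRingHom ℝ) from rfl,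
        ← RingHom.mapMatrix_apply, ← RingHom.map_det]
    rw [← castdet, h, Int.cast_zero]
  have hD1 : (1 : ℤ) ≤ |M.det| := Int.one_le_abs hD0
  intro j
  have hNle : |(M.updateCol j c).det| ≤ (m ^ m * U ^ m : ℕ) := by
    apply habs
    intro k l
    rw [Matrix.updateCol_apply]
    split
    · exact hb (g k)
    · exact hA (g k) l
  -- pass to ℝ
  set B : ℝ := ((m : ℝ) * (U : ℝ)) ^ m with hB
  have hBeq : B = ((m ^ m * U ^ m : ℕ) : ℝ) := by push_cast; ring
  have hDleR : |(M.det : ℝ)| ≤ B := by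
    rw [hBeq, ← Int.cast_abs]
    exact_mod_cast hDle
  have hD1R : (1 : ℝ) ≤ |(M.det : ℝ)| := by
    rw [← Int.cast_abs]; exact_mod_cast hD1
  have hNleR : |((M.updateCol j c).det : ℝ)| ≤ B := by
    rw [hBeq, ← Int.cast_abs]
    exact_mod_cast hNle
  have hkey : |(M.det : ℝ)| * |y j| = |((M.updateCol j c).det : ℝ)| := by
    rw [← abs_mul, hcramer j]
  constructor
  · nlinarith [abs_nonneg (y j), abs_nonneg ((M.det : ℝ))]
  · intro hyj
    have hN0' : (M.updateCol j c).det ≠ 0 := by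
      intro h
      have hc0 := hcramer j
      rw [h, Int.cast_zero] at hc0
      have hDne : (M.det : ℝ) ≠ 0 := Int.cast_ne_zero.mpr hD0
      rcases mul_eq_zero.1 hc0 with h' | h'
      · exact hDne h'
      · exact hyj h'
    have hN1 : (1 : ℝ) ≤ |((M.updateCol j c).det : ℝ)| := by
      rw [← Int.cast_abs]
      exact_mod_cast Int.one_le_abs hN0'
    have hBpos : 0 < B := lt_of_lt_of_le zero_lt_one (le_trans hD1R hDleR)
    rw [div_le_iff₀ hBpos]
    nlinarith [hD1R, hDleR, hkey, abs_nonneg (y j)]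
end

section
/- Let D = {T_1,...,T_n} ⊆ 2^[m] and let c_i ≤ d_i be reals for each i. There exists a convex function f: ℝ^m → ℝ with c_i ≤ f(T_i) ≤ d_i for all i (identifying T_i with its characteristic vector in ℝ^m) if and only if the convex roof ĝ of the partial function {(T_1,d_1),...,(T_n,d_n)} satisfies c_i ≤ ĝ(T_i) ≤ d_i for all i. -/
open Finset

section RoofAux

variable {E : Type*} [NormedAddCommGroup E] [NormedSpace ℝ E]
variable {n : ℕ}

/-- Feasible weight vectors supported on `s` representing `p i`. -/
def RoofFeas (p : Fin n → E) (s : Finset (Fin n)) (i : Fin n) (lam : Fin n → ℝ) : Prop :=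
  (∀ j, 0 ≤ lam j) ∧ (∀ j ∉ s, lam j = 0) ∧ (∑ j, lam j = 1) ∧ (∑ j, lam j • p j = p i)

/-- The set of values of the partial function at feasible combinations. -/
def RoofSet (p : Fin n → E) (d : Fin n → ℝ) (s : Finset (Fin n)) (i : Fin n) : Set ℝ :=
  {y | ∃ lam, RoofFeas p s i lam ∧ y = ∑ j, lam j * d j}

lemma roofFeas_single (p : Fin n → E) {s : Finset (Fin n)} {i : Fin n} (hi : i ∈ s) :
    RoofFeas p s i (fun j => if j = i then 1 else 0) := by
  refine ⟨fun j => by positivity, fun j hj => ?_, by simp, by simp⟩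
  have : j ≠ i := fun h => hj (h ▸ hi)
  simp [this]

lemma di_mem_roofSet (p : Fin n → E) (d : Fin n → ℝ) {s : Finset (Fin n)} {i : Fin n}
    (hi : i ∈ s) : d i ∈ RoofSet p d s i := by
  refine ⟨_, roofFeas_single p hi, by simp⟩

lemma roofSet_bddBelow (p : Fin n → E) (d : Fin n → ℝ) {s : Finset (Fin n)} {i : Fin n}
    (hi : i ∈ s) : BddBelow (RoofSet p d s i) := by
  refine ⟨s.inf' ⟨i, hi⟩ d, ?_⟩
  rintro y ⟨lam, ⟨h0, hsupp, hsum, -⟩, rfl⟩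
  calc s.inf' ⟨i, hi⟩ d = ∑ j, lam j * s.inf' ⟨i, hi⟩ d := by
        rw [← Finset.sum_mul, hsum, one_mul]
    _ ≤ ∑ j, lam j * d j := by
        refine Finset.sum_le_sum fun j _ => ?_
        by_cases hj : j ∈ s
        · exact mul_le_mul_of_nonneg_left (Finset.inf'_le _ hj) (h0 j)
        · simp [hsupp j hj]

/-- The set of convex combinations of `q j`, `j ∈ s`. -/
def CombSet (q : Fin n → E) (s : Finset (Fin n)) : Set E :=
  {x | ∃ lam : Fin n → ℝ, (∀ j, 0 ≤ lam j) ∧ (∀ j ∉ s, lam j = 0) ∧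
    (∑ j, lam j = 1) ∧ (∑ j, lam j • q j = x)}

lemma mem_combSet (q : Fin n → E) {s : Finset (Fin n)} {j : Fin n} (hj : j ∈ s) :
    q j ∈ CombSet q s := by
  refine ⟨fun k => if k = j then 1 else 0, fun k => by positivity, fun k hk => ?_, by simp, by simp⟩
  have : k ≠ j := fun h => hk (h ▸ hj)
  simp [this]

lemma convex_combSet (q : Fin n → E) (s : Finset (Fin n)) : Convex ℝ (CombSet q s) := by
  rintro x ⟨lam, h0, hs, h1, hx⟩ y ⟨mu, g0, gs, g1, hy⟩ a b ha hb hab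
  refine ⟨fun j => a * lam j + b * mu j, ?_, ?_, ?_, ?_⟩
  · intro j; have := h0 j; have := g0 j; positivity
  · intro j hj; simp [hs j hj, gs j hj]
  · simp only [Finset.sum_add_distrib, ← Finset.mul_sum, h1, g1, mul_one, hab]
  · simp only [add_smul, mul_smul, Finset.sum_add_distrib, ← Finset.smul_sum, hx, hy]

lemma isCompact_combSet (q : Fin n → E) (s : Finset (Fin n)) : IsCompact (CombSet q s) := by
  have hL : IsCompact {lam : Fin n → ℝ | (∀ j, 0 ≤ lam j) ∧ (∀ j ∉ s, lam j = 0) ∧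
      (∑ j, lam j = 1)} := by
    refine Metric.isCompact_of_isClosed_isBounded ?_ ?_
    · have h1 : IsClosed {lam : Fin n → ℝ | ∀ j, 0 ≤ lam j} := by
        rw [Set.setOf_forall]
        exact isClosed_iInter fun j => isClosed_le continuous_const (continuous_apply j)
      have h2 : IsClosed {lam : Fin n → ℝ | ∀ j ∉ s, lam j = 0} := by
        rw [Set.setOf_forall]
        refine isClosed_iInter fun j => ?_
        by_cases hj : j ∈ s
        · simp only [hj, not_true_eq_false, false_implies, Set.setOf_true]
          exact isClosed_univ
        · simp only [hj, not_false_eq_true, true_implies]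
          exact isClosed_eq (continuous_apply j) continuous_const
      have h3 : IsClosed {lam : Fin n → ℝ | ∑ j, lam j = 1} :=
        isClosed_eq (by exact continuous_finset_sum _ fun j _ => continuous_apply j)
          continuous_const
      exact (h1.inter (h2.inter h3) : _)
    · refine (Metric.isBounded_closedBall (x := (0 : Fin n → ℝ)) (r := 1)).subset ?_
      rintro lam ⟨h0, -, h1⟩
      rw [Metric.mem_closedBall, dist_zero_right]
      refine (pi_norm_le_iff_of_nonneg zero_le_one).2 fun j => ?_
      rw [Real.norm_eq_abs, abs_le]
      constructor
      · linarith [h0 j]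
      · calc lam j ≤ ∑ k, lam k := Finset.single_le_sum (fun k _ => h0 k) (Finset.mem_univ j)
          _ = 1 := h1
  have himg : CombSet q s = (fun lam : Fin n → ℝ => ∑ j, lam j • q j) ''
      {lam : Fin n → ℝ | (∀ j, 0 ≤ lam j) ∧ (∀ j ∉ s, lam j = 0) ∧ (∑ j, lam j = 1)} := by
    ext x
    constructor
    · rintro ⟨lam, h0, hs, h1, hx⟩; exact ⟨lam, ⟨h0, hs, h1⟩, hx⟩
    · rintro ⟨lam, ⟨h0, hs, h1⟩, hx⟩; exact ⟨lam, h0, hs, h1, hx⟩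
  rw [himg]
  exact hL.image (continuous_finset_sum _ fun j _ => (continuous_apply j).smul continuous_const)

/-- ε-approximate affine minorant touching the roof at `p i`. -/
lemma exists_minorant_near {p : Fin n → E} {d : Fin n → ℝ} {s : Finset (Fin n)} {i : Fin n}
    (hi : i ∈ s) {ε : ℝ} (hε : 0 < ε) :
    ∃ (v : E →L[ℝ] ℝ) (b : ℝ), (∀ j ∈ s, v (p j) + b ≤ d j) ∧
      sInf (RoofSet p d s i) - ε < v (p i) + b := by
  set g := sInf (RoofSet p d s i) with hg
  set q : Fin n → E × ℝ := fun j => (p j, d j) with hq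
  have hpt : ((p i, g - ε) : E × ℝ) ∉ CombSet q s := by
    rintro ⟨lam, h0, hsupp, h1, hrep⟩
    have hfst : ∑ j, lam j • p j = p i := by
      have := congrArg Prod.fst hrep
      simpa [Prod.fst_sum] using this
    have hsnd : ∑ j, lam j * d j = g - ε := by
      have := congrArg Prod.snd hrep
      simpa [Prod.snd_sum] using this
    have : g ≤ g - ε :=
      csInf_le (roofSet_bddBelow p d hi) ⟨lam, ⟨h0, hsupp, h1, hfst⟩, hsnd.symm⟩
    linarith
  obtain ⟨φ, u, hlow, hup⟩ := geometric_hahn_banach_closed_point (convex_combSet q s)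
    (isCompact_combSet q s).isClosed hpt
  set sc : ℝ := φ (0, 1) with hsc
  have hsplit : ∀ (x : E) (t : ℝ), φ (x, t) = φ (x, 0) + t * sc := by
    intro x t
    have : ((x, t) : E × ℝ) = (x, 0) + t • (0, 1) := by
      simp [Prod.ext_iff]
    rw [this, map_add, map_smul, smul_eq_mul]
  have hgd : g ≤ d i := csInf_le (roofSet_bddBelow p d hi) (di_mem_roofSet p d hi)
  have hdi : φ (p i, 0) + d i * sc < u := by
    have := hlow _ (mem_combSet q hi)
    rwa [hsplit] at this
  have hpti : u < φ (p i, 0) + (g - ε) * sc := by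
    have := hup
    rwa [hsplit] at this
  have hscneg : sc < 0 := by
    nlinarith
  refine ⟨(-(1 / sc)) • (φ.comp (ContinuousLinearMap.inl ℝ E ℝ)), u / sc, ?_, ?_⟩
  · intro j hj
    have hj' := hlow _ (mem_combSet q hj)
    rw [hsplit] at hj'
    simp only [ContinuousLinearMap.smul_apply, ContinuousLinearMap.comp_apply,
      ContinuousLinearMap.inl_apply, smul_eq_mul]
    have h2 : (u - φ (p j, 0)) / sc ≤ d j := by
      rw [div_le_iff_of_neg hscneg]; linarith
    calc -(1 / sc) * φ (p j, 0) + u / sc = (u - φ (p j, 0)) / sc := by ring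
      _ ≤ d j := h2
  · simp only [ContinuousLinearMap.smul_apply, ContinuousLinearMap.comp_apply,
      ContinuousLinearMap.inl_apply, smul_eq_mul]
    have h2 : g - ε < (u - φ (p i, 0)) / sc := by
      rw [lt_div_iff_of_neg hscneg]; linarith
    calc g - ε < (u - φ (p i, 0)) / sc := h2
      _ = -(1 / sc) * φ (p i, 0) + u / sc := by ring
/-- Dichotomy: either `p i` is in the relative interior of the hull, or there is a
supporting functional that is not constant on the points. -/
lemma dichotomy [FiniteDimensional ℝ E] {p : Fin n → E} {s : Finset (Fin n)} {i : Fin n}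
    (hi : i ∈ s) :
    (∃ r > 0, ∀ u : E, u ∈ Submodule.span ℝ ((fun j => p j - p i) '' ↑s) → ‖u‖ ≤ r →
        p i + u ∈ CombSet p s) ∨
      (∃ ψ : E →L[ℝ] ℝ, (∀ j ∈ s, ψ (p j) ≤ ψ (p i)) ∧ ∃ j0 ∈ s, ψ (p j0) < ψ (p i)) := by
  set W : Set E := (fun j => p j - p i) '' ↑s with hW
  set U : Submodule ℝ E := Submodule.span ℝ W with hU
  set K : Set U := {u : U | p i + (u : E) ∈ CombSet p s} with hK
  have hWU : W ⊆ (U : Set E) := Submodule.subset_span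
  have hwmem : ∀ j ∈ s, p j - p i ∈ U := fun j hj => hWU ⟨j, hj, rfl⟩
  have h0K : (0 : U) ∈ K := by
    simp only [hK, Set.mem_setOf_eq, Submodule.coe_zero, add_zero]
    exact mem_combSet p hi
  have hwK : ∀ j (hj : j ∈ s), (⟨p j - p i, hwmem j hj⟩ : U) ∈ K := by
    intro j hj
    simp only [hK, Set.mem_setOf_eq, add_sub_cancel]
    exact mem_combSet p hj
  have hKconv : Convex ℝ K := by
    intro x hx y hy a b ha hb hab
    show p i + ((a • x + b • y : U) : E) ∈ CombSet p s
    have h1 : p i + ((a • x + b • y : U) : E) = a • (p i + (x : E)) + b • (p i + (y : E)) := by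
      have hp : p i = (a + b) • p i := by rw [hab, one_smul]
      push_cast
      conv_lhs => rw [hp]
      module
    rw [h1]
    exact convex_combSet p s hx hy ha hb hab
  -- span of the lifted generators is everything
  have hLspan : Submodule.span ℝ ((Subtype.val : U → E) ⁻¹' W) = (⊤ : Submodule ℝ U) := by
    apply Submodule.map_injective_of_injective U.injective_subtype
    rw [Submodule.map_span, Submodule.map_top, Submodule.range_subtype]
    rw [Submodule.coe_subtype, Set.image_preimage_eq_of_subset
      (by rw [Subtype.range_coe]; exact hWU)]
  have hKspan : affineSpan ℝ K = ⊤ := by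
    rw [AffineSubspace.affineSpan_eq_top_iff_vectorSpan_eq_top_of_nonempty ℝ ↥U ↥U ⟨0, h0K⟩]
    rw [eq_top_iff, ← hLspan]
    rw [Submodule.span_le]
    rintro u hu
    obtain ⟨j, hj, hju⟩ := hu
    have huK : u ∈ K := by
      have : u = (⟨p j - p i, hwmem j hj⟩ : U) := Subtype.ext hju.symm
      rw [this]; exact hwK j hj
    have := vsub_mem_vectorSpan ℝ huK h0K
    simpa using this
  have hintK : (interior K).Nonempty := hKconv.interior_nonempty_iff_affineSpan_eq_top.2 hKspan
  by_cases h0 : (0 : U) ∈ interior K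
  · left
    obtain ⟨ε, hε, hball⟩ := Metric.mem_nhds_iff.1 (mem_interior_iff_mem_nhds.1 h0)
    refine ⟨ε / 2, by linarith, fun u hu hnorm => ?_⟩
    have hx : (⟨u, hu⟩ : U) ∈ Metric.ball (0 : U) ε := by
      rw [Metric.mem_ball, dist_zero_right]
      calc ‖(⟨u, hu⟩ : U)‖ = ‖u‖ := rfl
        _ ≤ ε / 2 := hnorm
        _ < ε := by linarith
    exact hball hx
  · right
    obtain ⟨f, hf⟩ := geometric_hahn_banach_open_point hKconv.interior isOpen_interior h0
    simp only [map_zero] at hf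
    obtain ⟨y0, hy0⟩ := hintK
    have hy0lt : f y0 < 0 := hf y0 hy0
    -- f ≤ 0 on K
    have hKle : ∀ x ∈ K, f x ≤ 0 := by
      intro x hx
      by_contra hfx
      push_neg at hfx
      set A := f y0
      set B := f x
      set D := 2 * (B + |A| + 1) with hD
      have hDpos : 0 < D := by positivity
      set t := B / D with ht
      have htpos : 0 < t := by positivity
      have ht1 : t < 1 := by
        rw [ht, div_lt_one hDpos]
        nlinarith [abs_nonneg A]
      have hz : t • y0 + (1 - t) • x ∈ interior K := by
        refine hKconv.combo_interior_closure_subset_interior (a := t) (b := 1 - t) htpos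
          (by linarith) (by ring) ?_
        exact Set.add_mem_add (Set.smul_mem_smul_set hy0)
          (Set.smul_mem_smul_set (subset_closure hx))
      have hlt : t * A + (1 - t) * B < 0 := by
        have := hf _ hz
        simpa [map_add, map_smul, smul_eq_mul] using this
      have h1 : t * (B - A) ≤ B / 2 := by
        rw [ht, div_mul_eq_mul_div, div_le_div_iff₀ hDpos (by norm_num : (0:ℝ) < 2)]
        nlinarith [neg_abs_le A, abs_nonneg A]
      linarith
    -- some generator is strictly negative
    have hstrict : ∃ j0, ∃ hj0 : j0 ∈ s, f ⟨p j0 - p i, hwmem j0 hj0⟩ < 0 := by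
      by_contra hall
      push_neg at hall
      have hker : ∀ u : U, f u = 0 := by
        have hle : Submodule.span ℝ ((Subtype.val : U → E) ⁻¹' W) ≤
            LinearMap.ker (f : U →ₗ[ℝ] ℝ) := by
          rw [Submodule.span_le]
          rintro u hu
          obtain ⟨j, hj, hju⟩ := hu
          have hu' : u = (⟨p j - p i, hwmem j hj⟩ : U) := Subtype.ext hju.symm
          have h1 : f u ≤ 0 := hKle u (hu' ▸ hwK j hj)
          have h2 : ¬ f u < 0 := by
            rw [hu']
            exact not_lt.2 (hall j hj)
          simp only [SetLike.mem_coe, LinearMap.mem_ker]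
          exact le_antisymm h1 (not_lt.1 h2)
        intro u
        have : u ∈ LinearMap.ker (f : U →ₗ[ℝ] ℝ) := by
          apply hle
          rw [hLspan]
          trivial
        simpa using this
      exact absurd (hker y0) (by linarith)
    obtain ⟨j0, hj0, hj0f⟩ := hstrict
    obtain ⟨g, hg, -⟩ := exists_extension_norm_eq U f
    refine ⟨g, fun j hj => ?_, j0, hj0, ?_⟩
    · have : g (p j - p i) = f ⟨p j - p i, hwmem j hj⟩ := hg ⟨p j - p i, hwmem j hj⟩
      have h2 := hKle _ (hwK j hj)
      rw [← this] at h2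
      rw [map_sub] at h2
      linarith
    · have : g (p j0 - p i) = f ⟨p j0 - p i, hwmem j0 hj0⟩ := hg ⟨p j0 - p i, hwmem j0 hj0⟩
      rw [map_sub] at this
      linarith
/-- An affine minorant of the data is bounded by `sup d` on the hull. -/
lemma affine_le_sup {p : Fin n → E} {d : Fin n → ℝ} {s : Finset (Fin n)} (hs : s.Nonempty)
    (v : E →L[ℝ] ℝ) (b : ℝ) (hv : ∀ j ∈ s, v (p j) + b ≤ d j) {x : E} (hx : x ∈ CombSet p s) :
    v x + b ≤ s.sup' hs d := by
  obtain ⟨lam, h0, hsupp, h1, hrep⟩ := hx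
  have hxx : v x + b = ∑ j, lam j * (v (p j) + b) := by
    rw [← hrep, map_sum]
    simp only [map_smul, smul_eq_mul, mul_add]
    rw [Finset.sum_add_distrib, ← Finset.sum_mul, h1, one_mul]
  rw [hxx]
  have : (s.sup' hs d) = ∑ j, lam j * (s.sup' hs d) := by
    rw [← Finset.sum_mul, h1, one_mul]
  rw [this]
  refine Finset.sum_le_sum fun j _ => ?_
  by_cases hj : j ∈ s
  · exact mul_le_mul_of_nonneg_left ((hv j hj).trans (Finset.le_sup' d hj)) (h0 j)
  · simp [hsupp j hj]

/-- The linear map sending an affine function to its values on the points indexed by `s`. -/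
def affEval (p : Fin n → E) (s : Finset (Fin n)) : ((E →L[ℝ] ℝ) × ℝ) →ₗ[ℝ] (Fin n → ℝ) where
  toFun := fun vb j => if j ∈ s then vb.1 (p j) + vb.2 else 0
  map_add' := by
    intro a c
    funext j
    by_cases hj : j ∈ s <;> simp [hj] <;> ring
  map_smul' := by
    intro r a
    funext j
    by_cases hj : j ∈ s <;> simp [hj] <;> ring

/-- Case B of the key lemma: `p i` in the relative interior of the hull. -/
lemma caseB [FiniteDimensional ℝ E] {p : Fin n → E} {d : Fin n → ℝ} {s : Finset (Fin n)}
    {i : Fin n} (hi : i ∈ s) {r : ℝ} (hr : 0 < r)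
    (hball : ∀ u : E, u ∈ Submodule.span ℝ ((fun j => p j - p i) '' ↑s) → ‖u‖ ≤ r →
        p i + u ∈ CombSet p s) :
    ∃ (v : E →L[ℝ] ℝ) (b : ℝ), (∀ j ∈ s, v (p j) + b ≤ d j) ∧
      sInf (RoofSet p d s i) ≤ v (p i) + b := by
  have hsne : s.Nonempty := ⟨i, hi⟩
  set g := sInf (RoofSet p d s i) with hg
  set M := s.sup' hsne d with hM
  set R := s.sup' hsne (fun j => ‖p j - p i‖) + 1 with hR
  have hRpos : 0 < R := by
    have : (0:ℝ) ≤ s.sup' hsne (fun j => ‖p j - p i‖) :=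
      le_trans (norm_nonneg _) (Finset.le_sup' (fun j => ‖p j - p i‖) hi)
    linarith
  have hRj : ∀ j ∈ s, ‖p j - p i‖ ≤ R := by
    intro j hj
    have := Finset.le_sup' (fun j => ‖p j - p i‖) hj
    linarith
  set k := r / R with hk
  have hkpos : 0 < k := by positivity
  set L := (g - 1) + ((g - 1) - M) / k with hL
  -- lower bound for values of constrained minorants
  have hlb : ∀ (v : E →L[ℝ] ℝ) (b : ℝ), (∀ j ∈ s, v (p j) + b ≤ d j) →
      g - 1 ≤ v (p i) + b → ∀ j ∈ s, L ≤ v (p j) + b := by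
    intro v b hv hvi j hj
    have humem : (k • (p i - p j)) ∈ Submodule.span ℝ ((fun j => p j - p i) '' ↑s) := by
      refine Submodule.smul_mem _ _ ?_
      have : p i - p j = -(p j - p i) := by module
      rw [this]
      exact Submodule.neg_mem _ (Submodule.subset_span ⟨j, hj, rfl⟩)
    have hunorm : ‖k • (p i - p j)‖ ≤ r := by
      rw [norm_smul, Real.norm_eq_abs, abs_of_pos hkpos, norm_sub_rev]
      calc k * ‖p j - p i‖ ≤ k * R := by
            exact mul_le_mul_of_nonneg_left (hRj j hj) hkpos.le
        _ = r := by rw [hk, div_mul_cancel₀ r hRpos.ne']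
    have hxmem : p i + k • (p i - p j) ∈ CombSet p s := hball _ humem hunorm
    have hxle : v (p i + k • (p i - p j)) + b ≤ M := affine_le_sup hsne v b hv hxmem
    rw [map_add, map_smul, map_sub, smul_eq_mul] at hxle
    -- hxle : v (p i) + k * (v (p i) - v (p j)) + b ≤ M
    have h1 : (1 + k) * (g - 1) - M ≤ k * (v (p j) + b) := by nlinarith
    have h2 : ((g - 1) - M) / k ≤ (v (p j) + b) - (g - 1) := by
      rw [div_le_iff₀ hkpos]
      nlinarith
    rw [hL]
    linarith
  -- the compact set of value vectors
  set Q : Set (Fin n → ℝ) := (LinearMap.range (affEval p s) : Set (Fin n → ℝ)) ∩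
    ({y | ∀ j ∈ s, y j ≤ d j} ∩ {y | g - 1 ≤ y i}) with hQ
  have hQclosed : IsClosed Q := by
    refine IsClosed.inter (Submodule.closed_of_finiteDimensional _) (IsClosed.inter ?_ ?_)
    · have : {y : Fin n → ℝ | ∀ j ∈ s, y j ≤ d j} = ⋂ j ∈ s, {y | y j ≤ d j} := by
        ext y; simp
      rw [this]
      exact isClosed_biInter fun j _ => isClosed_le (continuous_apply j) continuous_const
    · exact isClosed_le continuous_const (continuous_apply i)
  have hQval : ∀ y ∈ Q, ∃ (v : E →L[ℝ] ℝ) (b : ℝ), (∀ j ∈ s, y j = v (p j) + b) ∧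
      (∀ j ∉ s, y j = 0) ∧ (∀ j ∈ s, v (p j) + b ≤ d j) ∧ g - 1 ≤ v (p i) + b := by
    rintro y ⟨⟨⟨v, b⟩, hvb⟩, hyd, hyi⟩
    have hval : ∀ j, y j = if j ∈ s then v (p j) + b else 0 := by
      intro j; rw [← hvb]; rfl
    refine ⟨v, b, fun j hj => by rw [hval j, if_pos hj], fun j hj => by rw [hval j, if_neg hj],
      fun j hj => ?_, ?_⟩
    · have h3 : y j ≤ d j := hyd j hj
      rw [hval j, if_pos hj] at h3
      exact h3
    · have h3 : g - 1 ≤ y i := hyi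
      rw [hval i, if_pos hi] at h3
      exact h3
  have hQbdd : Bornology.IsBounded Q := by
    refine (Metric.isBounded_closedBall (x := (0 : Fin n → ℝ)) (r := |L| + |M|)).subset ?_
    intro y hy
    obtain ⟨v, b, hyval, hyzero, hvd, hvi⟩ := hQval y hy
    rw [Metric.mem_closedBall, dist_zero_right]
    refine (pi_norm_le_iff_of_nonneg (by positivity)).2 fun j => ?_
    rw [Real.norm_eq_abs, abs_le]
    by_cases hj : j ∈ s
    · rw [hyval j hj]
      constructor
      · have := hlb v b hvd hvi j hj
        have hLabs : -|L| ≤ L := neg_abs_le L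
        have : -(|L| + |M|) ≤ L := by
          have := abs_nonneg M; linarith
        linarith [hlb v b hvd hvi j hj]
      · have h1 : v (p j) + b ≤ d j := hvd j hj
        have h2 : d j ≤ M := Finset.le_sup' d hj
        have : M ≤ |M| := le_abs_self M
        have : (0:ℝ) ≤ |L| := abs_nonneg L
        linarith
    · rw [hyzero j hj]
      constructor
      · nlinarith [abs_nonneg L, abs_nonneg M]
      · positivity
  have hQne : Q.Nonempty := by
    obtain ⟨v, b, hvd, hvi⟩ := exists_minorant_near (p := p) (d := d) hi (by norm_num : (0:ℝ) < 1/2)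
    refine ⟨affEval p s (v, b), ⟨(v, b), rfl⟩, fun j hj => ?_, ?_⟩
    · show (if j ∈ s then v (p j) + b else 0) ≤ d j
      rw [if_pos hj]; exact hvd j hj
    · show g - 1 ≤ (if i ∈ s then v (p i) + b else 0)
      rw [if_pos hi]
      rw [← hg] at hvi
      linarith
  obtain ⟨y, hyQ, hymax⟩ := (Metric.isCompact_of_isClosed_isBounded hQclosed hQbdd).exists_isMaxOn
    hQne (continuous_apply i).continuousOn
  have hyge : g ≤ y i := by
    by_contra hlt
    push_neg at hlt
    set ε := min (g - y i) 1 with hε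
    have hεpos : 0 < ε := by
      refine lt_min (by linarith) one_pos
    obtain ⟨v, b, hvd, hvi⟩ := exists_minorant_near (p := p) (d := d) hi hεpos
    rw [← hg] at hvi
    have hmem : affEval p s (v, b) ∈ Q := by
      refine ⟨⟨(v, b), rfl⟩, fun j hj => ?_, ?_⟩
      · show (if j ∈ s then v (p j) + b else 0) ≤ d j
        rw [if_pos hj]; exact hvd j hj
      · show g - 1 ≤ (if i ∈ s then v (p i) + b else 0)
        rw [if_pos hi]
        have : ε ≤ 1 := min_le_right _ _
        linarith
    have h2 : (affEval p s (v, b)) i ≤ y i := hymax hmem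
    have hyi' : (affEval p s (v, b)) i = v (p i) + b := by
      show (if i ∈ s then v (p i) + b else 0) = _
      rw [if_pos hi]
    rw [hyi'] at h2
    have hεle : ε ≤ g - y i := min_le_left _ _
    linarith
  obtain ⟨v, b, hyval, hyzero, hvd, hvi⟩ := hQval y hyQ
  refine ⟨v, b, hvd, ?_⟩
  rw [← hyval i hi]
  exact hyge
/-- Key lemma: an exact affine minorant at a point of the convex roof. -/
lemma key_minorant [FiniteDimensional ℝ E] (p : Fin n → E) (d : Fin n → ℝ)
    (s : Finset (Fin n)) :
    ∀ i ∈ s, ∃ (v : E →L[ℝ] ℝ) (b : ℝ), (∀ j ∈ s, v (p j) + b ≤ d j) ∧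
      sInf (RoofSet p d s i) ≤ v (p i) + b := by
  induction s using Finset.strongInduction with
  | _ s IH =>
  intro i hi
  rcases dichotomy (p := p) hi with ⟨r, hr, hball⟩ | ⟨ψ, hψle, j0, hj0s, hj0⟩
  · exact caseB (d := d) hi hr hball
  · set s' := s.filter (fun j => ψ (p j) = ψ (p i)) with hs'
    have hsub : s' ⊂ s := Finset.filter_ssubset.2 ⟨j0, hj0s, by intro h; linarith⟩
    have hi' : i ∈ s' := Finset.mem_filter.2 ⟨hi, rfl⟩
    obtain ⟨v, b, hvb, hvi⟩ := IH s' hsub i hi'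
    have hSS : RoofSet p d s i = RoofSet p d s' i := by
      ext y
      constructor
      · rintro ⟨lam, ⟨h0, hsupp, h1, hrep⟩, rfl⟩
        refine ⟨lam, ⟨h0, ?_, h1, hrep⟩, rfl⟩
        intro j hj
        by_cases hjs : j ∈ s
        · -- j ∈ s, ψ (p j) ≠ ψ (p i)
          have hne : ψ (p j) ≠ ψ (p i) := by
            intro h
            exact hj (Finset.mem_filter.2 ⟨hjs, h⟩)
          have hlt : ψ (p j) < ψ (p i) := lt_of_le_of_ne (hψle j hjs) hne
          -- sum of nonneg terms is zero
          have hsum0 : ∑ l, lam l * (ψ (p i) - ψ (p l)) = 0 := by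
            have h2 : ψ (∑ l, lam l • p l) = ψ (p i) := by rw [hrep]
            rw [map_sum] at h2
            simp only [map_smul, smul_eq_mul] at h2
            have h3 : ∑ l, lam l * ψ (p i) = ψ (p i) := by
              rw [← Finset.sum_mul, h1, one_mul]
            calc ∑ l, lam l * (ψ (p i) - ψ (p l))
                = (∑ l, lam l * ψ (p i)) - ∑ l, lam l * ψ (p l) := by
                  rw [← Finset.sum_sub_distrib]; congr 1; funext l; ring
              _ = 0 := by rw [h2, h3, sub_self]
          have hterm : ∀ l ∈ Finset.univ, 0 ≤ lam l * (ψ (p i) - ψ (p l)) := by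
            intro l _
            by_cases hls : l ∈ s
            · exact mul_nonneg (h0 l) (by linarith [hψle l hls])
            · simp [hsupp l hls]
          have := (Finset.sum_eq_zero_iff_of_nonneg hterm).1 hsum0 j (Finset.mem_univ j)
          rcases mul_eq_zero.1 this with h | h
          · exact h
          · exfalso; linarith
        · exact hsupp j hjs
      · rintro ⟨lam, ⟨h0, hsupp, h1, hrep⟩, rfl⟩
        exact ⟨lam, ⟨h0, fun j hj => hsupp j (fun h => hj (hsub.1 h)), h1, hrep⟩, rfl⟩
    -- shift the minorant to handle points outside the face
    have hsne' : (s \ s').Nonempty := ⟨j0, Finset.mem_sdiff.2 ⟨hj0s, fun h => by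
      have := (Finset.mem_filter.1 h).2; linarith⟩⟩
    set t := max 0 ((s \ s').sup' hsne' (fun j => (v (p j) + b - d j) / (ψ (p i) - ψ (p j))))
      with ht
    have ht0 : 0 ≤ t := le_max_left _ _
    refine ⟨v + t • ψ, b - t * ψ (p i), ?_, ?_⟩
    · intro j hj
      simp only [ContinuousLinearMap.add_apply, ContinuousLinearMap.smul_apply, smul_eq_mul]
      by_cases hjs' : j ∈ s'
      · have hfix : ψ (p j) = ψ (p i) := (Finset.mem_filter.1 hjs').2
        rw [hfix]
        have := hvb j hjs'
        linarith
      · have hmem : j ∈ s \ s' := Finset.mem_sdiff.2 ⟨hj, hjs'⟩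
        have hne : ψ (p j) ≠ ψ (p i) := fun h => hjs' (Finset.mem_filter.2 ⟨hj, h⟩)
        have hlt : ψ (p j) < ψ (p i) := lt_of_le_of_ne (hψle j hj) hne
        have hden : 0 < ψ (p i) - ψ (p j) := by linarith
        have hge : (v (p j) + b - d j) / (ψ (p i) - ψ (p j)) ≤ t :=
          le_trans (Finset.le_sup' (fun j => (v (p j) + b - d j) / (ψ (p i) - ψ (p j))) hmem)
            (le_max_right _ _)
        rw [div_le_iff₀ hden] at hge
        nlinarith
    · simp only [ContinuousLinearMap.add_apply, ContinuousLinearMap.smul_apply, smul_eq_mul]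
      rw [hSS]
      linarith
end RoofAux

def charVec {m : ℕ} (S : Finset (Fin m)) : Fin m → ℝ :=
  fun j => if j ∈ S then 1 else 0

/-- there is a convex function on `ℝ^m` whose value at each defined
point `Tᵢ` lies in `[cᵢ, dᵢ]` iff the convex roof `ĝ` of the partial function with
values `dᵢ` satisfies `cᵢ ≤ ĝ(Tᵢ) ≤ dᵢ` for all `i`. -/
theorem convex_sandwich_iff_roof (m n : ℕ) (T : Fin n → Finset (Fin m))
    (c d : Fin n → ℝ) (hcd : ∀ i, c i ≤ d i)
    (hint : (interior (convexHull ℝ (Set.range (fun i => charVec (T i))))).Nonempty) :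
    (∃ f : (Fin m → ℝ) → ℝ, ConvexOn ℝ Set.univ f ∧
        ∀ i, c i ≤ f (charVec (T i)) ∧ f (charVec (T i)) ≤ d i) ↔
      (∀ i : Fin n,
        c i ≤ sInf {y : ℝ | ∃ lam : Fin n → ℝ,
            (∀ j, 0 ≤ lam j) ∧ (∑ j, lam j = 1) ∧
            (∑ j, lam j • charVec (T j) = charVec (T i)) ∧
            y = ∑ j, lam j * d j} ∧
          sInf {y : ℝ | ∃ lam : Fin n → ℝ,
            (∀ j, 0 ≤ lam j) ∧ (∑ j, lam j = 1) ∧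
            (∑ j, lam j • charVec (T j) = charVec (T i)) ∧
            y = ∑ j, lam j * d j} ≤ d i) := by
  set p : Fin n → (Fin m → ℝ) := fun i => charVec (T i) with hp
  have hEq : ∀ i : Fin n, {y : ℝ | ∃ lam : Fin n → ℝ,
      (∀ j, 0 ≤ lam j) ∧ (∑ j, lam j = 1) ∧
      (∑ j, lam j • charVec (T j) = charVec (T i)) ∧
      y = ∑ j, lam j * d j} = RoofSet p d Finset.univ i := by
    intro i
    ext y
    constructor
    · rintro ⟨lam, h0, h1, h2, h3⟩
      exact ⟨lam, ⟨h0, fun j hj => absurd (Finset.mem_univ j) hj, h1, h2⟩, h3⟩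
    · rintro ⟨lam, ⟨h0, _, h1, h2⟩, h3⟩
      exact ⟨lam, h0, h1, h2, h3⟩
  constructor
  · rintro ⟨f, hconv, hfbd⟩ i
    rw [hEq i]
    constructor
    · refine le_csInf ⟨d i, di_mem_roofSet p d (Finset.mem_univ i)⟩ ?_
      rintro y ⟨lam, ⟨h0, -, h1, h2⟩, rfl⟩
      have hJ : f (∑ j, lam j • p j) ≤ ∑ j, lam j • f (p j) :=
        hconv.map_sum_le (fun j _ => h0 j) h1 (fun j _ => Set.mem_univ _)
      rw [h2] at hJ
      have hstep : ∑ j, lam j • f (p j) ≤ ∑ j, lam j * d j := by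
        refine Finset.sum_le_sum fun j _ => ?_
        rw [smul_eq_mul]
        exact mul_le_mul_of_nonneg_left (hfbd j).2 (h0 j)
      calc c i ≤ f (p i) := (hfbd i).1
        _ ≤ ∑ j, lam j • f (p j) := hJ
        _ ≤ ∑ j, lam j * d j := hstep
    · exact csInf_le (roofSet_bddBelow p d (Finset.mem_univ i))
        (di_mem_roofSet p d (Finset.mem_univ i))
  · intro h
    rcases Nat.eq_zero_or_pos n with hn | hn
    · subst hn
      exact ⟨fun _ => 0, convexOn_const 0 convex_univ, fun i => i.elim0⟩
    haveI : Nonempty (Fin n) := ⟨⟨0, hn⟩⟩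
    have hne : (Finset.univ : Finset (Fin n)).Nonempty := Finset.univ_nonempty
    have hkey := fun i : Fin n => key_minorant p d Finset.univ i (Finset.mem_univ i)
    choose v b hvb hvi using hkey
    refine ⟨fun x => Finset.univ.sup' hne (fun k => v k x + b k), ⟨convex_univ, ?_⟩, fun i => ?_⟩
    · intro x _ y _ a bb ha hb hab
      simp only [smul_eq_mul]
      refine Finset.sup'_le _ _ fun k _ => ?_
      have heq : v k (a • x + bb • y) + b k = a * (v k x + b k) + bb * (v k y + b k) := by
        rw [map_add, map_smul, map_smul, smul_eq_mul, smul_eq_mul]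
        linear_combination (b k) * hab.symm
      rw [heq]
      have h1 : v k x + b k ≤ Finset.univ.sup' hne (fun k => v k x + b k) :=
        Finset.le_sup' (fun k => v k x + b k) (Finset.mem_univ k)
      have h2 : v k y + b k ≤ Finset.univ.sup' hne (fun k => v k y + b k) :=
        Finset.le_sup' (fun k => v k y + b k) (Finset.mem_univ k)
      have := mul_le_mul_of_nonneg_left h1 ha
      have := mul_le_mul_of_nonneg_left h2 hb
      linarith
    · constructor
      · have hci : c i ≤ sInf (RoofSet p d Finset.univ i) := by
          have := (h i).1
          rwa [hEq i] at this
        calc c i ≤ sInf (RoofSet p d Finset.univ i) := hci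
          _ ≤ v i (p i) + b i := hvi i
          _ ≤ Finset.univ.sup' hne (fun k => v k (p i) + b k) :=
            Finset.le_sup' (fun k => v k (p i) + b k) (Finset.mem_univ i)
      · refine Finset.sup'_le _ _ fun k _ => ?_
        exact hvb k i (Finset.mem_univ i)
end
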